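/- arXiv:0808.2368 — 7 statements merged into one kernel-verified Lean document; each statement's English description precedes it below -/
import Mathlib

section
/- Let L be a totally real number field of degree n over ℚ with real embeddings ι₁,...,ιₙ, viewed as embedding the ring of integers 𝒪_L into ℝⁿ via t ↦ (ι₁(t),...,ιₙ(t)). Then for any axis-parallel box B = {y ∈ ℝⁿ : |y_j - x_j| ≤ T_j for all j} with center x ∈ ℝⁿ and side half-lengths T_j > 0, the number of points of 𝒪_L lying in B is at most 1 + 2ⁿ T₁T₂⋯Tₙ, i.e. at most 1 + vol(B). -/
open scoped BigOperators

/-- Points in `[lo, hi]` pairwise separated by at least `d` number at most `1 + (hi-lo)/d`. -/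
private lemma sep_card (d lo : ℝ) (hd : 0 < d) :
    ∀ (m : ℕ) (F : Finset ℝ) (hi : ℝ), F.card = m → lo ≤ hi →
      (∀ a ∈ F, a ∈ Set.Icc lo hi) →
      (∀ a ∈ F, ∀ b ∈ F, a ≠ b → d ≤ |a - b|) →
      (F.card : ℝ) ≤ 1 + (hi - lo) / d := by
  intro m
  induction m using Nat.strong_induction_on with
  | _ m IH =>
    intro F hi hcard hlohi hmem hsep
    rcases le_or_gt F.card 1 with h1 | h1
    · have : (F.card : ℝ) ≤ 1 := by exact_mod_cast h1
      have h2 : 0 ≤ (hi - lo) / d := div_nonneg (by linarith) hd.le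
      linarith
    · have hne : F.Nonempty := Finset.card_pos.mp (by omega)
      set M := F.max' hne with hM
      have hMF : M ∈ F := F.max'_mem hne
      set F' := F.erase M with hF'
      have hcard' : F'.card = F.card - 1 := Finset.card_erase_of_mem hMF
      have hne' : F'.Nonempty := Finset.card_pos.mp (by omega)
      have hsub : ∀ a ∈ F', a ∈ Set.Icc lo (hi - d) := by
        intro a ha
        have haF : a ∈ F := (Finset.mem_erase.mp ha).2
        have haM : a ≠ M := (Finset.mem_erase.mp ha).1
        have hd1 : d ≤ |a - M| := hsep a haF M hMF haM
        have h2 : a ≤ M := F.le_max' a haF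
        have hMhi : M ≤ hi := (hmem M hMF).2
        have : |a - M| = M - a := by rw [abs_sub_comm]; exact abs_of_nonneg (by linarith)
        exact ⟨(hmem a haF).1, by linarith [this ▸ hd1]⟩
      obtain ⟨a0, ha0⟩ := hne'
      have hlohi' : lo ≤ hi - d := le_trans (hsub a0 ha0).1 (hsub a0 ha0).2
      have hIH := IH F'.card (by omega) F' (hi - d) rfl hlohi' hsub
        (fun a ha b hb hab => hsep a (Finset.mem_erase.mp ha).2 b (Finset.mem_erase.mp hb).2 hab)
      have hc : (F.card : ℝ) = (F'.card : ℝ) + 1 := by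
        rw [hcard']; push_cast [Nat.cast_sub (by omega : 1 ≤ F.card)]; ring
      have hdd : (hi - d - lo) / d = (hi - lo) / d - 1 := by field_simp; ring
      linarith

private lemma prod_embed_ge_one {L : Type*} [Field L] [NumberField L] (n : ℕ)
    (hn : Module.finrank ℚ L = n)
    (ι : Fin n → (L →+* ℝ)) (hι : Function.Injective ι)
    (u : L) (hu : u ≠ 0) (hint : IsIntegral ℤ u) :
    1 ≤ |∏ j, ι j u| := by
  classical
  let e : Fin n → (L →ₐ[ℚ] ℂ) := fun j => (Complex.ofRealHom.comp (ι j)).toRatAlgHom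
  have he : Function.Injective e := by
    intro a b hab
    apply hι
    ext z
    have := congrArg (fun (f : L →ₐ[ℚ] ℂ) => f z) hab
    exact Complex.ofReal_injective this
  have hbij : Function.Bijective e := by
    rw [Fintype.bijective_iff_injective_and_card]
    refine ⟨he, ?_⟩
    rw [Fintype.card_fin, AlgHom.card ℚ L ℂ, hn]
  have hprod : ((Algebra.norm ℚ u : ℚ) : ℂ) = ((∏ j, ι j u : ℝ) : ℂ) := by
    have h1 : algebraMap ℚ ℂ (Algebra.norm ℚ u) = ∏ σ : L →ₐ[ℚ] ℂ, σ u :=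
      Algebra.norm_eq_prod_embeddings ℚ ℂ u
    have h2 : ∏ j, ((ι j u : ℝ) : ℂ) = ∏ σ : L →ₐ[ℚ] ℂ, σ u :=
      Fintype.prod_bijective e hbij _ _ (fun j => rfl)
    rw [show ((Algebra.norm ℚ u : ℚ) : ℂ) = algebraMap ℚ ℂ (Algebra.norm ℚ u) by norm_num,
      h1, ← h2]
    push_cast
    rfl
  have hq : ((Algebra.norm ℚ u : ℚ) : ℝ) = ∏ j, ι j u := by
    exact_mod_cast hprod
  have hnorm_int : IsIntegral ℤ (Algebra.norm ℚ u) := Algebra.isIntegral_norm ℚ hint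
  obtain ⟨m, hm⟩ := IsIntegrallyClosed.isIntegral_iff.mp hnorm_int
  have hnz : Algebra.norm ℚ u ≠ 0 := by
    rw [Algebra.norm_ne_zero_iff]
    exact hu
  have hm0 : m ≠ 0 := by rintro rfl; simp at hm; exact hnz hm.symm
  have h1m : (1 : ℚ) ≤ |(m : ℚ)| := by exact_mod_cast Int.one_le_abs (by exact_mod_cast hm0)
  calc (1:ℝ) ≤ |((m:ℚ) : ℝ)| := by exact_mod_cast h1m
    _ = |∏ j, ι j u| := by rw [← hq, ← hm]; simp

/-- Let `L` be a totally real number field of degree `n` with real embeddings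
`ι 0, …, ι (n-1)` (an injective family of `n` real embeddings of a degree-`n` field, i.e. all of
them).  Then the number of points of `𝒪_L`, embedded in `ℝⁿ` via `t ↦ (ι j t)_j`, lying in the
axis-parallel box `{y : |y j - x j| ≤ T j}` is at most `1 + 2 ^ n * ∏ j, T j = 1 + vol(B)`. -/
theorem stmt_0 {L : Type*} [Field L] [NumberField L] (n : ℕ)
    (hn : Module.finrank ℚ L = n)
    (ι : Fin n → (L →+* ℝ)) (hι : Function.Injective ι)
    (x T : Fin n → ℝ) (hT : ∀ j, 0 < T j)
    (S : Finset L)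
    (hSint : ∀ t ∈ S, IsIntegral ℤ t)
    (hSbox : ∀ t ∈ S, ∀ j, |ι j t - x j| ≤ T j) :
    (S.card : ℝ) ≤ 1 + 2 ^ n * ∏ j, T j := by
  classical
  rcases Nat.eq_zero_or_pos n with hn0 | hnpos
  · exfalso
    have := Module.finrank_pos (R := ℚ) (M := L)
    omega
  set j0 : Fin n := ⟨0, hnpos⟩ with hj0
  set P : ℝ := ∏ j ∈ Finset.univ.erase j0, (2 * T j) with hPdef
  have hP : 0 < P := Finset.prod_pos (fun j _ => by linarith [hT j])
  set d : ℝ := P⁻¹ with hddef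
  have hd : 0 < d := inv_pos.mpr hP
  -- key separation estimate
  have key : ∀ t ∈ S, ∀ s ∈ S, t ≠ s → d ≤ |ι j0 t - ι j0 s| := by
    intro t ht s hs hts
    set u : L := t - s with hu
    have hune : u ≠ 0 := sub_ne_zero_of_ne hts
    have huint : IsIntegral ℤ u := (hSint t ht).sub (hSint s hs)
    have h1 : (1:ℝ) ≤ |∏ j, ι j u| := prod_embed_ge_one n hn ι hι u hune huint
    have habs : |∏ j, ι j u| = ∏ j, |ι j u| := Finset.abs_prod _ _
    have hsplit : ∏ j, |ι j u| = |ι j0 u| * ∏ j ∈ Finset.univ.erase j0, |ι j u| :=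
      (Finset.mul_prod_erase Finset.univ _ (Finset.mem_univ j0)).symm
    have hbound : ∏ j ∈ Finset.univ.erase j0, |ι j u| ≤ P := by
      apply Finset.prod_le_prod (fun j _ => abs_nonneg _)
      intro j _
      have : ι j u = (ι j t - x j) - (ι j s - x j) := by
        simp only [hu, map_sub]; ring
      rw [this]
      calc |(ι j t - x j) - (ι j s - x j)| ≤ |ι j t - x j| + |ι j s - x j| := abs_sub _ _
        _ ≤ 2 * T j := by linarith [hSbox t ht j, hSbox s hs j]
    have hju : |ι j0 u| * P ≥ 1 := by
      have h0 : 0 ≤ |ι j0 u| := abs_nonneg _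
      calc (1:ℝ) ≤ |∏ j, ι j u| := h1
        _ = |ι j0 u| * ∏ j ∈ Finset.univ.erase j0, |ι j u| := by rw [habs, hsplit]
        _ ≤ |ι j0 u| * P := by exact mul_le_mul_of_nonneg_left hbound h0
    have : 1 / P ≤ |ι j0 u| := (div_le_iff₀ hP).mpr (by linarith)
    rw [one_div] at this
    calc d = P⁻¹ := rfl
      _ ≤ |ι j0 u| := this
      _ = |ι j0 t - ι j0 s| := by rw [hu, map_sub]
  -- image under the first embedding
  set F : Finset ℝ := S.image (fun t => ι j0 t) with hF
  have hinj : Set.InjOn (fun t => ι j0 t) S := by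
    intro t ht s hs h
    by_contra hne
    have h2 := key t ht s hs hne
    have h' : ι j0 t = ι j0 s := h
    rw [h'] at h2
    simp at h2
    linarith
  have hcard : F.card = S.card := Finset.card_image_of_injOn hinj
  have hmem : ∀ a ∈ F, a ∈ Set.Icc (x j0 - T j0) (x j0 + T j0) := by
    intro a ha
    obtain ⟨t, ht, rfl⟩ := Finset.mem_image.mp ha
    have := abs_le.mp (hSbox t ht j0)
    exact ⟨by linarith [this.1], by linarith [this.2]⟩
  have hsep : ∀ a ∈ F, ∀ b ∈ F, a ≠ b → d ≤ |a - b| := by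
    intro a ha b hb hab
    obtain ⟨t, ht, rfl⟩ := Finset.mem_image.mp ha
    obtain ⟨s, hs, rfl⟩ := Finset.mem_image.mp hb
    exact key t ht s hs (fun h => hab (by rw [h]))
  have hbound := sep_card d (x j0 - T j0) hd F.card F (x j0 + T j0) rfl
    (by linarith [hT j0]) hmem hsep
  have heval : (x j0 + T j0 - (x j0 - T j0)) / d = 2 * T j0 * P := by
    have h2 : x j0 + T j0 - (x j0 - T j0) = 2 * T j0 := by ring
    rw [hddef, h2, div_eq_mul_inv, inv_inv]
  have hfinal : 2 * T j0 * P = 2 ^ n * ∏ j, T j := by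
    have h1 : 2 * T j0 * P = ∏ j, (2 * T j) := Finset.mul_prod_erase Finset.univ (fun j => 2 * T j) (Finset.mem_univ j0)
    rw [h1, Finset.prod_mul_distrib, Finset.prod_const, Finset.card_univ, Fintype.card_fin]
  rw [← hcard]
  calc (F.card : ℝ) ≤ 1 + (x j0 + T j0 - (x j0 - T j0)) / d := hbound
    _ = 1 + 2 ^ n * ∏ j, T j := by rw [heval, hfinal]
end

section
/- Let K = L(√D) be a quadratic extension of a number field L and 𝒪 ⊆ 𝒪_K an order containing 𝒪_L. With 𝔤 = {u ∈ L : ∃ t ∈ 𝒪_L, (t + u√D)/2 ∈ 𝒪}, one has 𝒪 = {(t + u√D)/2 ∈ 𝒪_K : u ∈ 𝔤}. That is, an element (t+u√D)/2 of 𝒪_K lies in 𝒪 if and only if u ∈ 𝔤. -/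
open NumberField

/-- The set `𝔤 = {u ∈ L : ∃ t ∈ 𝒪_L, (t + u√D)/2 ∈ 𝒪}`. -/
def gSet (L : Type*) {K : Type*} [Field L] [Field K] [Algebra L K]
    (sqrtD : K) (O : Subring K) : Set L :=
  {u : L | ∃ t : L, IsIntegral ℤ t ∧
    (algebraMap L K t + algebraMap L K u * sqrtD) / 2 ∈ O}

/-- Let `K = L(√D)` be a quadratic extension of the number field `L` and
`𝒪 ⊆ 𝒪_K` an order containing `𝒪_L`.  With `𝔤 = {u ∈ L : ∃ t ∈ 𝒪_L, (t + u√D)/2 ∈ 𝒪}`, one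
has `𝒪 = {(t + u√D)/2 ∈ 𝒪_K : u ∈ 𝔤}`: an element `(t + u√D)/2` of `𝒪_K` lies in `𝒪` if and
only if `u ∈ 𝔤`. -/
theorem stmt_3 {L K : Type*} [Field L] [NumberField L] [Field K] [NumberField K]
    [Algebra L K] (hdeg : Module.finrank L K = 2)
    (D : L) (hDint : IsIntegral ℤ D) (hDns : ∀ x : L, x ^ 2 ≠ D)
    (sqrtD : K) (hsq : sqrtD ^ 2 = algebraMap L K D)
    (hsqnot : sqrtD ∉ Set.range (algebraMap L K))
    (O : Subring K)
    (hOint : ∀ x ∈ O, IsIntegral ℤ x)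
    (hOL : ∀ x : L, IsIntegral ℤ x → algebraMap L K x ∈ O)
    (hOfull : ∃ β ∈ O, β ∉ Set.range (algebraMap L K)) :
    (O : Set K) = {β : K | ∃ t u : L, u ∈ gSet L sqrtD O ∧ IsIntegral ℤ β ∧
      β = (algebraMap L K t + algebraMap L K u * sqrtD) / 2} := by
  have li : LinearIndependent L ![sqrtD, (1:K)] := by
    rw [linearIndependent_fin2]
    refine ⟨by simp, fun a h => hsqnot ⟨a, by simpa [Algebra.algebraMap_eq_smul_one] using h⟩⟩
  have : FiniteDimensional L K := .of_finrank_pos (by omega)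
  let B : Module.Basis (Fin 2) L K := basisOfLinearIndependentOfCardEqFinrank li (by simp [hdeg])
  have hB0 : B 0 = sqrtD := by simp [B, coe_basisOfLinearIndependentOfCardEqFinrank]
  have hB1 : B 1 = 1 := by simp [B, coe_basisOfLinearIndependentOfCardEqFinrank]
  have htrsq : Algebra.trace L K sqrtD = 0 := by
    rw [Algebra.trace_eq_matrix_trace B, Matrix.trace, Fin.sum_univ_two]
    simp only [Matrix.diag_apply, Algebra.leftMulMatrix_eq_repr_mul, hB0, hB1, mul_one,
      ← sq, hsq, Algebra.algebraMap_eq_smul_one]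
    rw [← hB1, ← hB0]
    simp [Module.Basis.repr_self, map_smul]
  have htr : ∀ a b : L, Algebra.trace L K (algebraMap L K a + algebraMap L K b * sqrtD)
      = 2 * a := by
    intro a b
    rw [map_add, Algebra.trace_algebraMap, hdeg, ← Algebra.smul_def, map_smul, htrsq]
    simp [two_smul, two_mul]
  have h2 : (2:K) ≠ 0 := two_ne_zero
  ext β
  simp only [SetLike.mem_coe, Set.mem_setOf_eq]
  constructor
  · intro hβ
    -- decompose β in the basis
    have hrep := B.sum_repr β
    rw [Fin.sum_univ_two, hB0, hB1] at hrep
    set b := B.repr β 0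
    set a := B.repr β 1
    have hβeq : β = algebraMap L K a + algebraMap L K b * sqrtD := by
      rw [← hrep, Algebra.smul_def, Algebra.smul_def, mul_one]; ring
    refine ⟨2*a, 2*b, ?_, hOint β hβ, ?_⟩
    · refine ⟨2*a, ?_, ?_⟩
      · have := Algebra.isIntegral_trace (R := ℤ) (L := L) (F := K) (hOint β hβ)
        rwa [hβeq, htr] at this
      · have : (algebraMap L K (2*a) + algebraMap L K (2*b) * sqrtD) / 2 = β := by
          rw [hβeq, map_mul, map_mul, map_ofNat]
          field_simp
        rwa [this]
    · rw [hβeq, map_mul, map_mul, map_ofNat]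
      field_simp
  · rintro ⟨t, u, ⟨t', ht'int, ht'O⟩, hβint, hβeq⟩
    have hdiff : β - (algebraMap L K t' + algebraMap L K u * sqrtD) / 2
        = algebraMap L K ((t - t') / 2) := by
      rw [hβeq, map_div₀, map_sub, map_ofNat]
      ring
    have hint : IsIntegral ℤ ((t - t') / 2) := by
      rw [← isIntegral_algebraMap_iff (algebraMap L K).injective, ← hdiff]
      exact hβint.sub (hOint _ ht'O)
    have : β = (algebraMap L K t' + algebraMap L K u * sqrtD) / 2
        + algebraMap L K ((t - t') / 2) := by rw [← hdiff]; ring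
    rw [this]
    exact O.add_mem ht'O (hOL _ hint)
end

section
/- Let K = L(√D) be a quadratic extension of a number field L and 𝒪 ⊆ 𝒪_K an order containing 𝒪_L, with 𝔤 = {u ∈ L : ∃ t ∈ 𝒪_L, (t + u√D)/2 ∈ 𝒪}. Then the relative discriminant ideal d(𝒪/𝒪_L) of 𝒪 over 𝒪_L equals 𝔤²·(D). -/
open NumberField

theorem sq_span {R : Type*} [CommRing R] [IsDomain R] [IsDedekindDomain R]
    (I : Ideal R) {a b : R} (ha : a ∈ I) (hb : b ∈ I) :
    a * b ∈ Ideal.span {x : R | ∃ c ∈ I, x = c ^ 2} := by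
  set J := Ideal.span {x : R | ∃ c ∈ I, x = c ^ 2} with hJdef
  by_cases hI : I = ⊥
  · subst hI
    rw [Ideal.mem_bot] at ha
    subst ha
    simpa using J.zero_mem
  have hJle : J ≤ I ^ 2 := by
    rw [hJdef, Ideal.span_le]
    rintro x ⟨c, hc, rfl⟩
    simpa [sq] using Ideal.mul_mem_mul hc hc
  suffices h : I ^ 2 ≤ J by
    exact h (by rw [sq]; exact Ideal.mul_mem_mul ha hb)
  obtain ⟨C, hC⟩ := Ideal.dvd_iff_le.mpr hJle
  have hI2 : I ^ 2 ≠ 0 := pow_ne_zero 2 hI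
  have hCtop : C = ⊤ := by
    by_contra hCtop
    obtain ⟨P, hPmax, hCP⟩ := Ideal.exists_le_maximal C hCtop
    have hIPlt : I * P < I := by
      refine lt_of_le_of_ne Ideal.mul_le_left ?_
      intro h
      have : I * P = I * ⊤ := by rw [Ideal.mul_top, h]
      exact hPmax.ne_top (mul_left_cancel₀ hI this)
    obtain ⟨x, hxI, hxIP⟩ := SetLike.exists_of_lt hIPlt
    have hx2J : x ^ 2 ∈ J := Ideal.subset_span ⟨x, hxI, rfl⟩
    have hAle : Ideal.span {x} ≤ I := Ideal.span_le.mpr (by simpa using hxI)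
    obtain ⟨B, hB⟩ := Ideal.dvd_iff_le.mpr hAle
    have hBP : ¬ B ≤ P := by
      intro h
      have hx : x ∈ I * B := hB ▸ Ideal.mem_span_singleton_self x
      exact hxIP (Ideal.mul_mono_right h hx)
    have hA2 : Ideal.span {x} ^ 2 ≤ I ^ 2 * P := by
      rw [Ideal.span_singleton_pow, Ideal.span_le, Set.singleton_subset_iff]
      have : J ≤ I ^ 2 * P := hC ▸ Ideal.mul_mono_right hCP
      exact this hx2J
    have hdvd : I ^ 2 * P ∣ Ideal.span {x} ^ 2 := Ideal.dvd_iff_le.mpr hA2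
    rw [hB, mul_pow] at hdvd
    have hPB2 : P ∣ B ^ 2 := (mul_dvd_mul_iff_left hI2).mp hdvd
    have hB2P : B ^ 2 ≤ P := Ideal.le_of_dvd hPB2
    rw [sq] at hB2P
    exact hBP (((Ideal.IsPrime.mul_le hPmax.isPrime).mp hB2P).elim id id)
  rw [hC, hCtop, Ideal.mul_top]

/-- Let `K = L(√D)` be a quadratic extension of the number field `L` and
`𝒪 ⊆ 𝒪_K` an order containing `𝒪_L`, with `𝔤` as above.  Then the relative discriminant ideal
`d(𝒪/𝒪_L)` — the `𝒪_L`-ideal generated by the discriminants `det (Tr_{K/L}(xᵢxⱼ))` of all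
`L`-bases `(x₁, x₂)` of `K` lying in `𝒪` — equals the ideal `𝔤²·(D)`, generated by
`{u·v·D : u, v ∈ 𝔤}`. -/
theorem stmt_4 {L K : Type*} [Field L] [NumberField L] [Field K] [NumberField K]
    [Algebra L K] (hdeg : Module.finrank L K = 2)
    (D : L) (hDint : IsIntegral ℤ D) (hDns : ∀ x : L, x ^ 2 ≠ D)
    (sqrtD : K) (hsq : sqrtD ^ 2 = algebraMap L K D)
    (hsqnot : sqrtD ∉ Set.range (algebraMap L K))
    (O : Subring K)
    (hOint : ∀ x ∈ O, IsIntegral ℤ x)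
    (hOL : ∀ x : L, IsIntegral ℤ x → algebraMap L K x ∈ O)
    (hOfull : ∃ β ∈ O, β ∉ Set.range (algebraMap L K)) :
    Submodule.span (𝓞 L) {a : L | ∃ x₁ x₂ : K, x₁ ∈ O ∧ x₂ ∈ O ∧
        LinearIndependent L ![x₁, x₂] ∧
        a = Matrix.det !![Algebra.trace L K (x₁ * x₁), Algebra.trace L K (x₁ * x₂);
          Algebra.trace L K (x₂ * x₁), Algebra.trace L K (x₂ * x₂)]}
      = Submodule.span (𝓞 L) {a : L | ∃ u ∈ gSet L sqrtD O, ∃ v ∈ gSet L sqrtD O,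
          a = u * v * D} := by
  have hD0 : D ≠ 0 := by
    intro h
    exact hDns 0 (by rw [h]; ring)
  haveI : FiniteDimensional L K := Module.finite_of_finrank_pos (by rw [hdeg]; norm_num)
  have hs0 : sqrtD ≠ 0 := by
    intro h
    apply hD0
    have h2 : algebraMap L K D = 0 := by rw [← hsq, h]; ring
    exact (map_eq_zero (algebraMap L K)).mp h2
  have li : LinearIndependent L ![(1 : K), sqrtD] := by
    rw [linearIndependent_fin2]
    refine ⟨by simpa using hs0, ?_⟩
    intro a h
    simp only [Matrix.cons_val_one, Matrix.head_cons, Matrix.cons_val_zero] at h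
    have ha : a ≠ 0 := by
      rintro rfl
      rw [zero_smul] at h
      exact zero_ne_one h
    apply hsqnot
    refine ⟨a⁻¹, ?_⟩
    rw [map_inv₀]
    rw [Algebra.smul_def] at h
    have hA : algebraMap L K a ≠ 0 := by
      simpa using ha
    field_simp at h ⊢
    rw [mul_comm] at h
    exact h.symm.trans (mul_comm _ _)
  let B : Module.Basis (Fin 2) L K := basisOfLinearIndependentOfCardEqFinrank li (by rw [hdeg]; simp)
  have hB0 : B 0 = 1 := by
    simp only [B, coe_basisOfLinearIndependentOfCardEqFinrank]
    rfl
  have hB1 : B 1 = sqrtD := by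
    simp only [B, coe_basisOfLinearIndependentOfCardEqFinrank]
    rfl
  have hrepr : ∀ a b : L, B.repr (algebraMap L K a + algebraMap L K b * sqrtD)
      = Finsupp.single 0 a + Finsupp.single 1 b := by
    intro a b
    have h : algebraMap L K a + algebraMap L K b * sqrtD = a • B 0 + b • B 1 := by
      rw [hB0, hB1, Algebra.smul_def, Algebra.smul_def, mul_one]
    rw [h, map_add, map_smul, map_smul, B.repr_self, B.repr_self,
      Finsupp.smul_single, Finsupp.smul_single, smul_eq_mul, smul_eq_mul, mul_one, mul_one]
  have hrepr0 : ∀ a b : L, B.repr (algebraMap L K a + algebraMap L K b * sqrtD) 0 = a := by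
    intro a b
    rw [hrepr]
    simp
  have hrepr1 : ∀ a b : L, B.repr (algebraMap L K a + algebraMap L K b * sqrtD) 1 = b := by
    intro a b
    rw [hrepr]
    simp
  have hdec : ∀ x : K,
      x = algebraMap L K (B.repr x 0) + algebraMap L K (B.repr x 1) * sqrtD := by
    intro x
    have h := B.sum_repr x
    rw [Fin.sum_univ_two, hB0, hB1, Algebra.smul_def, Algebra.smul_def, mul_one] at h
    exact h.symm
  have htr : ∀ a b : L,
      Algebra.trace L K (algebraMap L K a + algebraMap L K b * sqrtD) = 2 * a := by
    intro a b
    rw [Algebra.trace_eq_matrix_trace B, Matrix.trace_fin_two,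
      Algebra.leftMulMatrix_eq_repr_mul, Algebra.leftMulMatrix_eq_repr_mul, hB0, hB1, mul_one]
    have hx2 : (algebraMap L K a + algebraMap L K b * sqrtD) * sqrtD
        = algebraMap L K (b * D) + algebraMap L K a * sqrtD := by
      simp only [map_mul]
      rw [← hsq]
      ring
    rw [hx2, hrepr0, hrepr1]
    ring
  have htrInt : ∀ x ∈ O, IsIntegral ℤ (Algebra.trace L K x) := fun x hx =>
    Algebra.isIntegral_trace (hOint x hx)
  have h2a : ∀ x ∈ O, IsIntegral ℤ (2 * B.repr x 0) := by
    intro x hx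
    have h := htrInt x hx
    rw [hdec x, htr] at h
    exact h
  have hgmem : ∀ x ∈ O, 2 * B.repr x 1 ∈ gSet L sqrtD O := by
    intro x hx
    refine ⟨2 * B.repr x 0, h2a x hx, ?_⟩
    have h : algebraMap L K (2 * B.repr x 0) + algebraMap L K (2 * B.repr x 1) * sqrtD
        = 2 * x := by
      conv_rhs => rw [hdec x]
      simp only [map_mul, map_ofNat]
      ring
    have h2 : (2 : K) * x / 2 = x := by
      field_simp
    rw [h, h2]
    exact hx
  have hmul : ∀ a₁ b₁ a₂ b₂ : L, (algebraMap L K a₁ + algebraMap L K b₁ * sqrtD) *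
      (algebraMap L K a₂ + algebraMap L K b₂ * sqrtD)
      = algebraMap L K (a₁ * a₂ + b₁ * b₂ * D) + algebraMap L K (a₁ * b₂ + b₁ * a₂) * sqrtD := by
    intro a₁ b₁ a₂ b₂
    simp only [map_add, map_mul]
    rw [← hsq]
    ring
  have htrmul : ∀ x₁ x₂ : K, Algebra.trace L K (x₁ * x₂)
      = 2 * (B.repr x₁ 0 * B.repr x₂ 0 + B.repr x₁ 1 * B.repr x₂ 1 * D) := by
    intro x₁ x₂
    conv_lhs => rw [hdec x₁, hdec x₂]
    rw [hmul, htr]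
  have hconj : ∀ (a₁ b₁ a₂ b₂ : L) (x₁ x₂ : K),
      x₁ = algebraMap L K a₁ + algebraMap L K b₁ * sqrtD →
      x₂ = algebraMap L K a₂ + algebraMap L K b₂ * sqrtD →
      (algebraMap L K (2 * a₁) - x₁) * x₂
        = algebraMap L K (a₁ * a₂ - b₁ * b₂ * D) + algebraMap L K (a₁ * b₂ - b₁ * a₂) * sqrtD := by
    intro a₁ b₁ a₂ b₂ x₁ x₂ h₁ h₂
    subst h₁
    subst h₂
    simp only [map_add, map_mul, map_sub, map_ofNat]
    rw [← hsq]
    ring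
  have hwg : ∀ x₁ ∈ O, ∀ x₂ ∈ O,
      2 * (B.repr x₁ 0 * B.repr x₂ 1 - B.repr x₁ 1 * B.repr x₂ 0) ∈ gSet L sqrtD O := by
    intro x₁ h₁ x₂ h₂
    have hy : (algebraMap L K (2 * B.repr x₁ 0) - x₁) * x₂ ∈ O :=
      O.mul_mem (O.sub_mem (hOL _ (h2a x₁ h₁)) h₁) h₂
    have hcoord := hconj _ _ _ _ x₁ x₂ (hdec x₁) (hdec x₂)
    have hg := hgmem _ hy
    rw [show B.repr ((algebraMap L K (2 * B.repr x₁ 0) - x₁) * x₂) 1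
        = B.repr x₁ 0 * B.repr x₂ 1 - B.repr x₁ 1 * B.repr x₂ 0 from by
      rw [hcoord, hrepr1]] at hg
    exact hg
  have hdet : ∀ x₁ x₂ : K,
      Matrix.det !![Algebra.trace L K (x₁ * x₁), Algebra.trace L K (x₁ * x₂);
          Algebra.trace L K (x₂ * x₁), Algebra.trace L K (x₂ * x₂)]
        = (2 * (B.repr x₁ 0 * B.repr x₂ 1 - B.repr x₁ 1 * B.repr x₂ 0))
          * (2 * (B.repr x₁ 0 * B.repr x₂ 1 - B.repr x₁ 1 * B.repr x₂ 0)) * D := by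
    intro x₁ x₂
    rw [Matrix.det_fin_two_of, htrmul x₁ x₁, htrmul x₁ x₂, htrmul x₂ x₁, htrmul x₂ x₂]
    ring
  have hg0 : (0 : L) ∈ gSet L sqrtD O := by
    refine ⟨0, isIntegral_zero, ?_⟩
    have e : (algebraMap L K 0 + algebraMap L K 0 * sqrtD) / 2 = 0 := by
      rw [map_zero]
      ring
    rw [e]
    exact O.zero_mem
  have hgadd : ∀ u ∈ gSet L sqrtD O, ∀ v ∈ gSet L sqrtD O, u + v ∈ gSet L sqrtD O := by
    rintro u ⟨t, ht, hto⟩ v ⟨s, hs, hso⟩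
    refine ⟨t + s, ht.add hs, ?_⟩
    have e : (algebraMap L K (t + s) + algebraMap L K (u + v) * sqrtD) / 2
        = (algebraMap L K t + algebraMap L K u * sqrtD) / 2
          + (algebraMap L K s + algebraMap L K v * sqrtD) / 2 := by
      rw [map_add, map_add]
      ring
    rw [e]
    exact O.add_mem hto hso
  have hgsmul : ∀ (z : L), IsIntegral ℤ z → ∀ u ∈ gSet L sqrtD O, z * u ∈ gSet L sqrtD O := by
    rintro z hz u ⟨t, ht, hto⟩
    refine ⟨z * t, hz.mul ht, ?_⟩
    have e : (algebraMap L K (z * t) + algebraMap L K (z * u) * sqrtD) / 2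
        = algebraMap L K z * ((algebraMap L K t + algebraMap L K u * sqrtD) / 2) := by
      rw [map_mul, map_mul]
      ring
    rw [e]
    exact O.mul_mem (hOL z hz) hto
  have hsqint : IsIntegral ℤ sqrtD := by
    refine IsIntegral.of_pow (n := 2) (by norm_num) ?_
    rw [hsq]
    exact hDint.map (IsScalarTower.toAlgHom ℤ L K)
  have hDg : ∀ w ∈ gSet L sqrtD O, IsIntegral ℤ (D * w) := by
    rintro w ⟨t, ht, hto⟩
    set y := (algebraMap L K t + algebraMap L K w * sqrtD) / 2 with hy
    have hx := hOint _ hto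
    have hInt : IsIntegral ℤ ((y + y - algebraMap L K t) * sqrtD) :=
      ((hx.add hx).sub (ht.map (IsScalarTower.toAlgHom ℤ L K))).mul hsqint
    have e : (y + y - algebraMap L K t) * sqrtD = algebraMap L K (D * w) := by
      rw [hy, map_mul, ← hsq]
      ring
    rw [e] at hInt
    exact (isIntegral_algebraMap_iff (algebraMap L K).injective).mp hInt
  have hDww : ∀ w ∈ gSet L sqrtD O, D * w * w ∈ Submodule.span (𝓞 L)
      {a : L | ∃ x₁ x₂ : K, x₁ ∈ O ∧ x₂ ∈ O ∧
        LinearIndependent L ![x₁, x₂] ∧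
        a = Matrix.det !![Algebra.trace L K (x₁ * x₁), Algebra.trace L K (x₁ * x₂);
          Algebra.trace L K (x₂ * x₁), Algebra.trace L K (x₂ * x₂)]} := by
    intro w hw
    by_cases hw0 : w = 0
    · rw [hw0]
      simpa using (Submodule.span (𝓞 L) _).zero_mem
    obtain ⟨t, ht, hto⟩ := hw
    apply Submodule.subset_span
    set x := (algebraMap L K t + algebraMap L K w * sqrtD) / 2 with hxdef
    have hxdec : x = algebraMap L K (t / 2) + algebraMap L K (w / 2) * sqrtD := by
      rw [hxdef, map_div₀, map_div₀, map_ofNat]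
      ring
    have h1dec : (1 : K) = algebraMap L K 1 + algebraMap L K 0 * sqrtD := by simp
    have hca1 : B.repr (1 : K) 0 = 1 := by
      have h := hrepr0 1 0
      rw [← h1dec] at h
      exact h
    have hcb1 : B.repr (1 : K) 1 = 0 := by
      have h := hrepr1 1 0
      rw [← h1dec] at h
      exact h
    have hcax : B.repr x 0 = t / 2 := by
      have h := hrepr0 (t / 2) (w / 2)
      rw [← hxdec] at h
      exact h
    have hcbx : B.repr x 1 = w / 2 := by
      have h := hrepr1 (t / 2) (w / 2)
      rw [← hxdec] at h
      exact h
    have hw2 : (w / 2 : L) ≠ 0 := by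
      intro h
      apply hw0
      field_simp at h
      simpa using h
    have hli2 : LinearIndependent L ![(1 : K), x] := by
      rw [linearIndependent_fin2]
      constructor
      · simp only [Matrix.cons_val_one, Matrix.head_cons, Matrix.cons_val_zero]
        intro h0
        apply hw2
        rw [← hcbx, h0, map_zero]
        simp
      · intro c h
        simp only [Matrix.cons_val_one, Matrix.head_cons, Matrix.cons_val_zero] at h
        have h2 : B.repr (c • x) 1 = B.repr (1 : K) 1 := by rw [h]
        rw [map_smul, Finsupp.smul_apply, smul_eq_mul, hcbx, hcb1] at h2
        rcases mul_eq_zero.mp h2 with hc | hcc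
        · rw [hc, zero_smul] at h
          exact zero_ne_one h
        · exact hw2 hcc
    refine ⟨1, x, O.one_mem, hto, hli2, ?_⟩
    rw [hdet 1 x, hca1, hcb1, hcax, hcbx]
    field_simp
    ring
  apply le_antisymm
  · apply Submodule.span_mono
    rintro a ⟨x₁, x₂, h₁, h₂, -, rfl⟩
    exact ⟨_, hwg x₁ h₁ x₂ h₂, _, hwg x₁ h₁ x₂ h₂, hdet x₁ x₂⟩
  · rw [Submodule.span_le]
    rintro a ⟨u, hu, v, hv, rfl⟩
    set I : Ideal (𝓞 L) := Ideal.span {z : 𝓞 L | ∃ w ∈ gSet L sqrtD O, (z : L) = D * w}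
      with hIdef
    have hzu : (⟨D * u, hDg u hu⟩ : 𝓞 L) ∈ I := Ideal.subset_span ⟨u, hu, rfl⟩
    have hzv : (⟨D * v, hDg v hv⟩ : 𝓞 L) ∈ I := Ideal.subset_span ⟨v, hv, rfl⟩
    have hchar : ∀ c ∈ I, ∃ w ∈ gSet L sqrtD O, (c : L) = D * w := by
      intro c hc
      refine Submodule.span_induction ?_ ?_ ?_ ?_ hc
      · rintro z ⟨w, hw, hz⟩
        exact ⟨w, hw, hz⟩
      · exact ⟨0, hg0, by simp⟩
      · rintro y z - - ⟨wy, hwy, hyw⟩ ⟨wz, hwz, hzw⟩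
        refine ⟨wy + wz, hgadd _ hwy _ hwz, ?_⟩
        push_cast [hyw, hzw]
        ring
      · rintro z y - ⟨w, hw, hyw⟩
        refine ⟨(z : L) * w, hgsmul _ z.2 _ hw, ?_⟩
        have hzy : ((z • y : 𝓞 L) : L) = (z : L) * (y : L) := rfl
        rw [hzy, hyw]
        ring
    have key := sq_span I hzu hzv
    set φ : 𝓞 L →ₗ[𝓞 L] L :=
      (LinearMap.mulLeft (𝓞 L) (D⁻¹ : L)).comp (Algebra.linearMap (𝓞 L) L) with hφdef
    have hφ : ∀ z : 𝓞 L, φ z = D⁻¹ * (z : L) := fun z => rfl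
    have hfinal : Submodule.map φ (Ideal.span {x : 𝓞 L | ∃ c ∈ I, x = c ^ 2})
        ≤ Submodule.span (𝓞 L)
          {a : L | ∃ x₁ x₂ : K, x₁ ∈ O ∧ x₂ ∈ O ∧
            LinearIndependent L ![x₁, x₂] ∧
            a = Matrix.det !![Algebra.trace L K (x₁ * x₁), Algebra.trace L K (x₁ * x₂);
              Algebra.trace L K (x₂ * x₁), Algebra.trace L K (x₂ * x₂)]} := by
      rw [← Ideal.submodule_span_eq, Submodule.map_span, Submodule.span_le]
      rintro a ⟨xx, ⟨c, hc, rfl⟩, rfl⟩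
      obtain ⟨w, hw, hcw⟩ := hchar c hc
      have hval : φ (c ^ 2) = D * w * w := by
        rw [hφ]
        have hco : ((c ^ 2 : 𝓞 L) : L) = ((c : L)) ^ 2 := rfl
        rw [hco, hcw]
        field_simp
      rw [hval]
      exact hDww w hw
    have hres := hfinal (Submodule.mem_map_of_mem key)
    have hφval : φ ((⟨D * u, hDg u hu⟩ : 𝓞 L) * (⟨D * v, hDg v hv⟩ : 𝓞 L)) = u * v * D := by
      show D⁻¹ * (D * u * (D * v)) = u * v * D
      field_simp
    rw [SetLike.mem_coe, ← hφval]
    exact hres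
end

section
/- Let K/L be a quadratic extension of number fields and 𝒪 ⊆ 𝒪_K an order containing 𝒪_L with conductor 𝔣 = {x ∈ 𝒪_K : x𝒪_K ⊆ 𝒪} and 𝔣₀ = 𝔣 ∩ 𝒪_L. Then the relative discriminants satisfy d(𝒪/𝒪_L) = 𝔣₀² · D_{K/L}, where D_{K/L} = d(𝒪_K/𝒪_L) is the relative discriminant of K over L. -/
open NumberField

/-- The relative discriminant set of a subset `O'` of `K` over `L` (for `K/L` quadratic): all
discriminants `det (Tr_{K/L}(xᵢxⱼ))` of `L`-bases `(x₁, x₂)` of `K` lying in `O'`. -/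
def discSet (L : Type*) {K : Type*} [Field L] [Field K] [Algebra L K] (O' : Set K) :
    Set L :=
  {a : L | ∃ x₁ x₂ : K, x₁ ∈ O' ∧ x₂ ∈ O' ∧ LinearIndependent L ![x₁, x₂] ∧
    a = Matrix.det !![Algebra.trace L K (x₁ * x₁), Algebra.trace L K (x₁ * x₂);
      Algebra.trace L K (x₂ * x₁), Algebra.trace L K (x₂ * x₂)]}

/- ### Auxiliary lemmas -/

section Dedekind

theorem Stmt5Aux.sq_span_ideal {R : Type*} [CommRing R] [IsDedekindDomain R] (J : Ideal R) :
    J * J = Ideal.span ((fun c => c * c) '' (J : Set R)) := by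
  refine le_antisymm ?_ ?_
  · by_cases hF : IsField R
    · letI := hF.toField
      rcases J.eq_bot_or_top with rfl | rfl
      · simp
      · rw [Ideal.top_mul]
        intro x _
        have h1 : (1:R) ∈ Ideal.span ((fun c => c * c) '' ((⊤ : Ideal R) : Set R)) :=
          Ideal.subset_span ⟨1, trivial, by norm_num⟩
        simpa using Ideal.mul_mem_left _ x h1
    · apply Ideal.le_of_localization_maximal
      intro P hP
      set Rp := Localization.AtPrime P
      have hPb : P ≠ ⊥ := Ring.ne_bot_of_isMaximal_of_not_isField hP hF
      haveI : IsDiscreteValuationRing Rp :=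
        IsLocalization.AtPrime.isDiscreteValuationRing_of_dedekind_domain R hPb Rp
      set f := algebraMap R Rp with hf
      obtain ⟨⟨g, hg⟩⟩ := IsPrincipalIdealRing.principal (Ideal.map f J)
      by_cases hg0 : g = 0
      · subst hg0
        rw [Ideal.map_mul, hg, Submodule.span_zero_singleton]
        simp
      · have claim : ∃ x₀ ∈ J, g ∈ Submodule.span Rp {f x₀} := by
          by_contra hcon
          push_neg at hcon
          have hsub : f '' (J : Set R) ⊆
              ((Submodule.span Rp {g} : Ideal Rp) * IsLocalRing.maximalIdeal Rp : Ideal Rp) := by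
            rintro _ ⟨x, hx, rfl⟩
            have hzJ : f x ∈ Submodule.span Rp {g} := by
              have := Ideal.mem_map_of_mem f hx
              rw [hg] at this
              exact this
            rw [Submodule.mem_span_singleton] at hzJ
            obtain ⟨dz, hdz⟩ := hzJ
            have hdu : ¬ IsUnit dz := by
              intro hu
              apply hcon x hx
              rw [Submodule.mem_span_singleton]
              exact ⟨(hu.unit⁻¹ : Rpˣ), by
                rw [← hdz, smul_eq_mul, smul_eq_mul, ← mul_assoc]
                simp⟩
            have hfx : f x = g * dz := by rw [← hdz, smul_eq_mul, mul_comm]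
            rw [hfx]
            exact Ideal.mul_mem_mul (Submodule.mem_span_singleton_self g)
              ((IsLocalRing.mem_maximalIdeal dz).mpr hdu)
          have hle : Submodule.span Rp {g} ≤
              IsLocalRing.maximalIdeal Rp • (Submodule.span Rp {g} : Ideal Rp) := by
            rw [smul_eq_mul, mul_comm]
            calc (Submodule.span Rp {g} : Ideal Rp) = Ideal.map f J := hg.symm
            _ = Ideal.span (f '' (J : Set R)) := rfl
            _ ≤ (Submodule.span Rp {g} : Ideal Rp) * IsLocalRing.maximalIdeal Rp :=
                Ideal.span_le.mpr hsub
          have hbot := Submodule.eq_bot_of_le_smul_of_le_jacobson_bot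
            (IsLocalRing.maximalIdeal Rp) (Submodule.span Rp {g})
            (Submodule.fg_span_singleton g) hle
            (by rw [IsLocalRing.jacobson_eq_maximalIdeal ⊥ bot_ne_top])
          exact hg0 (by simpa using hbot.le (Submodule.mem_span_singleton_self g))
        obtain ⟨x₀, hx₀, hxg⟩ := claim
        rw [Ideal.map_mul, hg]
        refine Ideal.mul_le.mpr ?_
        intro r hr s hs
        rw [Submodule.mem_span_singleton] at hr hs
        obtain ⟨u, rfl⟩ := hr
        obtain ⟨v, rfl⟩ := hs
        rw [Submodule.mem_span_singleton] at hxg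
        obtain ⟨w, rfl⟩ := hxg
        have hmem : f (x₀ * x₀) ∈ Ideal.map f (Ideal.span ((fun c => c * c) '' (J : Set R))) :=
          Ideal.mem_map_of_mem f (Ideal.subset_span ⟨x₀, hx₀, rfl⟩)
        have : u • w • f x₀ * v • w • f x₀ = (u * v * w * w) • f (x₀ * x₀) := by
          simp only [smul_eq_mul, map_mul]; ring
        rw [this]
        exact Submodule.smul_mem _ _ hmem
  · rw [Ideal.span_le]
    rintro _ ⟨c, hc, rfl⟩
    exact Ideal.mul_mem_mul hc hc

theorem Stmt5Aux.sq_span_submodule {R L : Type*} [CommRing R] [IsDedekindDomain R] [Field L]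
    [Algebra R L] [IsFractionRing R L] (C : Submodule R L)
    (hC : IsFractional (nonZeroDivisors R) C) :
    C * C = Submodule.span R ((fun c : L => c * c) '' (C : Set L)) := by
  refine le_antisymm ?_ ?_
  · obtain ⟨d, hd0, hdint⟩ := hC
    set d' := algebraMap R L d with hd'
    have hd'0 : d' ≠ 0 := by
      rw [hd']
      exact fun h => nonZeroDivisors.ne_zero hd0 ((IsFractionRing.to_map_eq_zero_iff (K := L)).mp h)
    set μd : L →ₗ[R] L := LinearMap.restrictScalars R ((LinearMap.mul L L) d') with hμd
    set μinv : L →ₗ[R] L := LinearMap.restrictScalars R ((LinearMap.mul L L) ((d'*d')⁻¹)) with hμinv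
    set J : Ideal R := Submodule.comap (Algebra.linearMap R L) (Submodule.map μd C) with hJ
    have hJmem : ∀ c ∈ C, ∃ r ∈ J, algebraMap R L r = d' * c := by
      intro c hc
      obtain ⟨r, hr⟩ := hdint c hc
      refine ⟨r, ?_, ?_⟩
      · rw [hJ]
        refine Submodule.mem_comap.mpr ⟨c, hc, ?_⟩
        · rw [hμd]
          simpa [Algebra.smul_def] using hr.symm
      · rw [hr, Algebra.smul_def]
    have step : Submodule.map μinv (Submodule.map (Algebra.linearMap R L) ((J*J : Ideal R) : Submodule R R)) ≤
        Submodule.span R ((fun c : L => c * c) '' (C : Set L)) := by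
      rw [Stmt5Aux.sq_span_ideal J]
      rw [show ((Ideal.span ((fun c => c * c) '' (J : Set R)) : Ideal R) : Submodule R R)
            = Submodule.span R ((fun c => c * c) '' (J : Set R)) from rfl]
      rw [Submodule.map_span, Submodule.map_span, Submodule.span_le]
      rintro _ ⟨_, ⟨_, ⟨z, hz, rfl⟩, rfl⟩, rfl⟩
      have hz' : algebraMap R L z ∈ Submodule.map μd C := hz
      obtain ⟨c, hc, hcz⟩ := hz'
      have hcz' : d' * c = algebraMap R L z := by simpa [hμd] using hcz
      have : μinv (Algebra.linearMap R L ((fun c => c * c) z)) = c * c := by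
        simp only [hμinv, LinearMap.restrictScalars_apply, LinearMap.mul_apply', Algebra.linearMap_apply,
          map_mul, ← hcz']
        field_simp
      rw [this]
      exact Submodule.subset_span ⟨c, hc, rfl⟩
    refine Submodule.mul_le.mpr ?_
    intro m hm n hn
    obtain ⟨r, hrJ, hr⟩ := hJmem m hm
    obtain ⟨s, hsJ, hs⟩ := hJmem n hn
    have hmem : μinv (Algebra.linearMap R L (r * s)) ∈
        Submodule.map μinv (Submodule.map (Algebra.linearMap R L) ((J*J : Ideal R) : Submodule R R)) :=
      Submodule.mem_map_of_mem (Submodule.mem_map_of_mem (Ideal.mul_mem_mul hrJ hsJ))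
    have heq : μinv (Algebra.linearMap R L (r * s)) = m * n := by
      simp only [hμinv, LinearMap.restrictScalars_apply, LinearMap.mul_apply', Algebra.linearMap_apply,
        map_mul, hr, hs]
      field_simp
    rw [← heq]
    exact step hmem
  · rw [Submodule.span_le]
    rintro _ ⟨c, hc, rfl⟩
    exact Submodule.mul_mem_mul hc hc

end Dedekind

namespace Stmt5Aux

section Coord

variable {L K : Type*} [Field L] [Field K] [Algebra L K]

theorem exists_basis (hdeg : Module.finrank L K = 2) (β : K)
    (hβ : β ∉ Set.range (algebraMap L K)) :
    ∃ B : Module.Basis (Fin 2) L K, ⇑B = ![1, β] := by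
  have li : LinearIndependent L ![(1 : K), β] := by
    rw [LinearIndependent.pair_iff]
    intro s t hst
    by_cases ht : t = 0
    · subst ht
      rw [zero_smul, add_zero, smul_eq_zero] at hst
      exact ⟨hst.resolve_right one_ne_zero, rfl⟩
    · exfalso
      apply hβ
      refine ⟨-s/t, ?_⟩
      have h1 : t • β = (-s) • (1:K) := by
        rw [neg_smul]; exact eq_neg_of_add_eq_zero_right hst
      rw [Algebra.algebraMap_eq_smul_one, div_eq_mul_inv, mul_comm, ← smul_smul, ← h1,
        smul_smul, inv_mul_cancel₀ ht, one_smul]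
  exact ⟨basisOfLinearIndependentOfCardEqFinrank li (by simp [hdeg]),
    coe_basisOfLinearIndependentOfCardEqFinrank li (by simp [hdeg])⟩

variable (B : Module.Basis (Fin 2) L K) (β : K) (hB : ⇑B = ![1, β])

set_option linter.unusedSectionVars false

include hB

theorem repr01 (u v : L) :
    B.repr (algebraMap L K u + algebraMap L K v * β) 0 = u ∧
    B.repr (algebraMap L K u + algebraMap L K v * β) 1 = v := by
  have h0 : B 0 = 1 := by rw [hB]; rfl
  have h1 : B 1 = β := by rw [hB]; rfl
  have : algebraMap L K u + algebraMap L K v * β = u • B 0 + v • B 1 := by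
    rw [h0, h1, Algebra.smul_def, Algebra.smul_def, mul_one]
  rw [this]
  simp [Module.Basis.repr_self, Finsupp.single_apply]

theorem hx (x : K) :
    x = algebraMap L K (B.repr x 0) + algebraMap L K (B.repr x 1) * β := by
  have h0 : B 0 = 1 := by rw [hB]; rfl
  have h1 : B 1 = β := by rw [hB]; rfl
  conv_lhs => rw [← B.sum_repr x]
  rw [Fin.sum_univ_two, h0, h1, Algebra.smul_def, Algebra.smul_def, mul_one]

theorem trace_formula (x : K) :
    Algebra.trace L K x = B.repr x 0 + B.repr (x * β) 1 := by
  have h0 : B 0 = 1 := by rw [hB]; rfl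
  have h1 : B 1 = β := by rw [hB]; rfl
  rw [Algebra.trace_eq_matrix_trace B x, Matrix.trace, Fin.sum_univ_two]
  simp only [Matrix.diag_apply, Algebra.leftMulMatrix_eq_repr_mul]
  rw [h0, h1, mul_one]

theorem bxβ (x : K) :
    B.repr (x * β) 1 = B.repr x 0 + B.repr x 1 * B.repr (β * β) 1 := by
  have hββ := hx B β hB (β * β)
  have hxx := hx B β hB x
  have h1 : x * β = algebraMap L K (B.repr x 1 * B.repr (β * β) 0)
      + algebraMap L K (B.repr x 0 + B.repr x 1 * B.repr (β * β) 1) * β := by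
    simp only [map_add, map_mul]
    linear_combination β * hxx + (algebraMap L K (B.repr x 1)) * hββ
  rw [h1, (repr01 B β hB _ _).2]

theorem keyσ (x₁ x₂ : K) :
    B.repr ((algebraMap L K (Algebra.trace L K x₁) - x₁) * x₂) 1
      = B.repr x₁ 0 * B.repr x₂ 1 - B.repr x₂ 0 * B.repr x₁ 1 := by
  have hββ := hx B β hB (β * β)
  have hx₁ := hx B β hB x₁
  have hx₂ := hx B β hB x₂
  have htr : Algebra.trace L K x₁
      = B.repr x₁ 0 + (B.repr x₁ 0 + B.repr x₁ 1 * B.repr (β * β) 1) := by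
    rw [trace_formula B β hB x₁, bxβ B β hB x₁]
  have e1 : (algebraMap L K (Algebra.trace L K x₁) - x₁) * x₂
      = algebraMap L K ((B.repr x₁ 0 + B.repr x₁ 1 * B.repr (β * β) 1) * B.repr x₂ 0
          - B.repr x₁ 1 * B.repr x₂ 1 * B.repr (β * β) 0)
        + algebraMap L K (B.repr x₁ 0 * B.repr x₂ 1 - B.repr x₂ 0 * B.repr x₁ 1) * β := by
    have htrφ : algebraMap L K (Algebra.trace L K x₁)
        = algebraMap L K (B.repr x₁ 0) + (algebraMap L K (B.repr x₁ 0)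
            + algebraMap L K (B.repr x₁ 1) * algebraMap L K (B.repr (β * β) 1)) := by
      rw [htr]; simp only [map_add, map_mul]
    simp only [map_add, map_mul, map_sub]
    linear_combination x₂ * htrφ - x₂ * hx₁
      + (algebraMap L K (B.repr x₁ 0) + algebraMap L K (B.repr x₁ 1) * algebraMap L K (B.repr (β * β) 1)
          - algebraMap L K (B.repr x₁ 1) * β) * hx₂
      - (algebraMap L K (B.repr x₁ 1) * algebraMap L K (B.repr x₂ 1)) * hββ
  rw [e1, (repr01 B β hB _ _).2]

theorem trace_mul_expand (x₁ x₂ : K) :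
    Algebra.trace L K (x₁ * x₂)
      = B.repr x₁ 0 * B.repr x₂ 0 * Algebra.trace L K 1
        + (B.repr x₁ 0 * B.repr x₂ 1 + B.repr x₂ 0 * B.repr x₁ 1) * Algebra.trace L K β
        + B.repr x₁ 1 * B.repr x₂ 1 * Algebra.trace L K (β * β) := by
  have hx₁ := hx B β hB x₁
  have hx₂ := hx B β hB x₂
  have tsmul : ∀ (u : L) (z : K), Algebra.trace L K (algebraMap L K u * z)
      = u * Algebra.trace L K z := by
    intro u z
    rw [← Algebra.smul_def, map_smul, smul_eq_mul]
  have e1 : x₁ * x₂ = algebraMap L K (B.repr x₁ 0 * B.repr x₂ 0) * 1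
      + algebraMap L K (B.repr x₁ 0 * B.repr x₂ 1 + B.repr x₂ 0 * B.repr x₁ 1) * β
      + algebraMap L K (B.repr x₁ 1 * B.repr x₂ 1) * (β*β) := by
    simp only [map_add, map_mul]
    linear_combination x₂ * hx₁
      + (algebraMap L K (B.repr x₁ 0) + algebraMap L K (B.repr x₁ 1) * β) * hx₂
  rw [e1, map_add, map_add, tsmul, tsmul, tsmul]

theorem repr_one' : B.repr 1 0 = 1 ∧ B.repr 1 1 = 0 := by
  have h0 : B 0 = 1 := by rw [hB]; rfl
  rw [← h0]
  simp [Module.Basis.repr_self, Finsupp.single_apply]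

theorem repr_β' : B.repr β 0 = 0 ∧ B.repr β 1 = 1 := by
  have h1 : B 1 = β := by rw [hB]; rfl
  rw [← h1]
  simp [Module.Basis.repr_self, Finsupp.single_apply]

theorem disc_formula (x₁ x₂ : K) :
    Matrix.det !![Algebra.trace L K (x₁*x₁), Algebra.trace L K (x₁*x₂);
        Algebra.trace L K (x₂*x₁), Algebra.trace L K (x₂*x₂)]
      = (B.repr x₁ 0 * B.repr x₂ 1 - B.repr x₂ 0 * B.repr x₁ 1)^2
        * (Algebra.trace L K 1 * Algebra.trace L K (β*β)
            - Algebra.trace L K β * Algebra.trace L K β) := by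
  rw [Matrix.det_fin_two_of, trace_mul_expand B β hB x₁ x₁, trace_mul_expand B β hB x₁ x₂,
    trace_mul_expand B β hB x₂ x₁, trace_mul_expand B β hB x₂ x₂]
  ring

theorem li_of (x₁ x₂ : K) (h : B.repr x₁ 0 * B.repr x₂ 1 - B.repr x₂ 0 * B.repr x₁ 1 ≠ 0) :
    LinearIndependent L ![x₁, x₂] := by
  rw [LinearIndependent.pair_iff]
  intro s t hst
  have h0 : s * B.repr x₁ 0 + t * B.repr x₂ 0 = 0 := by
    have := congrArg (fun z => B.repr z 0) hst
    simpa [map_add, map_smul] using this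
  have h1 : s * B.repr x₁ 1 + t * B.repr x₂ 1 = 0 := by
    have := congrArg (fun z => B.repr z 1) hst
    simpa [map_add, map_smul] using this
  constructor
  · have hs : s * (B.repr x₁ 0 * B.repr x₂ 1 - B.repr x₂ 0 * B.repr x₁ 1) = 0 := by
      linear_combination (B.repr x₂ 1) * h0 - (B.repr x₂ 0) * h1
    exact (mul_eq_zero.mp hs).resolve_right h
  · have ht : t * (B.repr x₁ 0 * B.repr x₂ 1 - B.repr x₂ 0 * B.repr x₁ 1) = 0 := by
      linear_combination (B.repr x₁ 0) * h1 - (B.repr x₁ 1) * h0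
    exact (mul_eq_zero.mp ht).resolve_right h

theorem bval (x : K) :
    (Algebra.trace L K 1 * Algebra.trace L K (β*β)
        - Algebra.trace L K β * Algebra.trace L K β) * B.repr x 1
      = Algebra.trace L K 1 * Algebra.trace L K (x*β)
        - Algebra.trace L K β * Algebra.trace L K x := by
  have h1 := trace_mul_expand B β hB x β
  rw [(repr_β' B β hB).1, (repr_β' B β hB).2] at h1
  have h2 := trace_mul_expand B β hB x 1
  rw [(repr_one' B β hB).1, (repr_one' B β hB).2, mul_one] at h2
  linear_combination (-(Algebra.trace L K 1)) * h1 + Algebra.trace L K β * h2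

theorem dd_ne [FiniteDimensional L K] [Algebra.IsSeparable L K] :
    Algebra.trace L K 1 * Algebra.trace L K (β*β)
      - Algebra.trace L K β * Algebra.trace L K β ≠ 0 := by
  have hd := Algebra.discr_not_zero_of_basis L B
  have hM : Algebra.traceMatrix L ⇑B
      = !![Algebra.trace L K (1*1), Algebra.trace L K (1*β);
          Algebra.trace L K (β*1), Algebra.trace L K (β*β)] := by
    have h0 : B 0 = 1 := by rw [hB]; rfl
    have h1 : B 1 = β := by rw [hB]; rfl
    ext i j
    fin_cases i <;> fin_cases j <;>
      simp [Algebra.traceMatrix_apply, Algebra.traceForm_apply, h0, h1]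
  rw [Algebra.discr_def, hM, Matrix.det_fin_two_of] at hd
  simp only [one_mul, mul_one] at hd
  exact hd

end Coord

section Master

variable {L K : Type*} [Field L] [NumberField L] [Field K] [Algebra L K]
variable (B : Module.Basis (Fin 2) L K) (β : K) (hB : ⇑B = ![1, β])

set_option linter.unusedSectionVars false

include hB

theorem master (s' : Set K) (C : Submodule (𝓞 L) L)
    (hCs : (C : Set L) = (fun x : K => B.repr x 1) '' s')
    (h1s : (1:K) ∈ s')
    (hσ : ∀ x ∈ s', algebraMap L K (Algebra.trace L K x) - x ∈ s')
    (hmuls : ∀ x ∈ s', ∀ y ∈ s', x * y ∈ s') :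
    Submodule.span (𝓞 L) (discSet L s')
      = Submodule.span (𝓞 L)
          ((fun c : L => (Algebra.trace L K 1 * Algebra.trace L K (β*β)
              - Algebra.trace L K β * Algebra.trace L K β) * (c*c)) '' (C : Set L)) := by
  apply le_antisymm
  · rw [Submodule.span_le]
    rintro _ ⟨x₁, x₂, h1, h2, hli, rfl⟩
    apply Submodule.subset_span
    refine ⟨B.repr x₁ 0 * B.repr x₂ 1 - B.repr x₂ 0 * B.repr x₁ 1, ?_, ?_⟩
    · rw [hCs]
      exact ⟨(algebraMap L K (Algebra.trace L K x₁) - x₁) * x₂,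
        hmuls _ (hσ x₁ h1) _ h2, keyσ B β hB x₁ x₂⟩
    · rw [disc_formula B β hB x₁ x₂]; ring
  · rw [Submodule.span_le]
    rintro _ ⟨c, hc, rfl⟩
    rw [SetLike.mem_coe] at hc
    have hc' : c ∈ (C : Set L) := hc
    rw [hCs] at hc'
    obtain ⟨x, hxs, hbx⟩ := hc'
    have hbx' : B.repr x 1 = c := hbx
    dsimp only
    by_cases hc0 : c = 0
    · have hz : (Algebra.trace L K 1 * Algebra.trace L K (β*β)
              - Algebra.trace L K β * Algebra.trace L K β) * (c*c) = 0 := by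
        rw [hc0]; ring
      rw [hz]
      exact Submodule.zero_mem _
    · apply Submodule.subset_span
      have he : B.repr (1:K) 0 * B.repr x 1 - B.repr x 0 * B.repr (1:K) 1 = c := by
        rw [(repr_one' B β hB).1, (repr_one' B β hB).2, hbx']; ring
      refine ⟨1, x, h1s, hxs, li_of B β hB 1 x (by rw [he]; exact hc0), ?_⟩
      rw [disc_formula B β hB 1 x, he]
      ring

end Master

end Stmt5Aux

open Stmt5Aux in
/-- Let `K/L` be a quadratic extension of number fields and `𝒪 ⊆ 𝒪_K` an
order containing `𝒪_L`, with conductor `𝔣 = {x ∈ 𝒪_K : x𝒪_K ⊆ 𝒪}` and `𝔣₀ = 𝔣 ∩ 𝒪_L`.  Then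
the relative discriminants satisfy `d(𝒪/𝒪_L) = 𝔣₀² · D_{K/L}` where `D_{K/L} = d(𝒪_K/𝒪_L)`,
all viewed as `𝒪_L`-submodules of `L`. -/
theorem stmt_5 {L K : Type*} [Field L] [NumberField L] [Field K] [NumberField K]
    [Algebra L K] (hdeg : Module.finrank L K = 2)
    (O : Subring K)
    (hOint : ∀ x ∈ O, IsIntegral ℤ x)
    (hOL : ∀ x : L, IsIntegral ℤ x → algebraMap L K x ∈ O)
    (hOfull : ∃ β ∈ O, β ∉ Set.range (algebraMap L K)) :
    Submodule.span (𝓞 L) (discSet L (O : Set K))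
      = (Submodule.span (𝓞 L) {u : L | IsIntegral ℤ u ∧
            ∀ y : K, IsIntegral ℤ y → algebraMap L K u * y ∈ O}) ^ 2
        * Submodule.span (𝓞 L) (discSet L {x : K | IsIntegral ℤ x}) := by
  classical
  obtain ⟨β, hβO, hβL⟩ := hOfull
  obtain ⟨B, hB⟩ := exists_basis hdeg β hβL
  haveI : FiniteDimensional L K := FiniteDimensional.of_finrank_pos (by rw [hdeg]; norm_num)
  have hβint : IsIntegral ℤ β := hOint β hβO
  -- coordinate lemmas
  have hsm : ∀ (l : L) (x : K), B.repr (algebraMap L K l * x) 1 = l * B.repr x 1 := by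
    intro l x
    rw [← Algebra.smul_def, map_smul]
    rfl
  have hRsm : ∀ (u : 𝓞 L) (c : L), u • c = algebraMap (𝓞 L) L u * c := by
    intro u c
    rw [Algebra.smul_def]
  have hintmap : ∀ (u : L), IsIntegral ℤ u → IsIntegral ℤ (algebraMap L K u) :=
    fun u h => h.map (IsScalarTower.toAlgHom ℤ L K)
  -- the two coordinate modules
  let Cb : Submodule (𝓞 L) L :=
    { carrier := (fun x : K => B.repr x 1) '' {x : K | IsIntegral ℤ x}
      add_mem' := by
        rintro c1 c2 ⟨x, hx, rfl⟩ ⟨y, hy, rfl⟩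
        exact ⟨x + y, hx.add hy, by simp⟩
      zero_mem' := ⟨0, isIntegral_zero, by simp⟩
      smul_mem' := by
        rintro u c ⟨x, hx, rfl⟩
        refine ⟨algebraMap L K (algebraMap (𝓞 L) L u) * x,
          (hintmap _ (RingOfIntegers.isIntegral_coe u)).mul hx, ?_⟩
        dsimp only
        rw [hsm, hRsm] }
  let Cc : Submodule (𝓞 L) L :=
    { carrier := (fun x : K => B.repr x 1) '' (O : Set K)
      add_mem' := by
        rintro c1 c2 ⟨x, hx, rfl⟩ ⟨y, hy, rfl⟩
        exact ⟨x + y, add_mem hx hy, by simp⟩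
      zero_mem' := ⟨0, zero_mem O, by simp⟩
      smul_mem' := by
        rintro u c ⟨x, hx, rfl⟩
        refine ⟨algebraMap L K (algebraMap (𝓞 L) L u) * x,
          mul_mem (hOL _ (RingOfIntegers.isIntegral_coe u)) hx, ?_⟩
        dsimp only
        rw [hsm, hRsm] }
  have hCcCb : Cc ≤ Cb := by
    rintro _ ⟨x, hx, rfl⟩
    exact ⟨x, hOint x hx, rfl⟩
  -- fractionality
  have hT0 : IsIntegral ℤ (Algebra.trace L K 1) := Algebra.isIntegral_trace isIntegral_one
  have hT1 : IsIntegral ℤ (Algebra.trace L K β) := Algebra.isIntegral_trace hβint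
  have hT2 : IsIntegral ℤ (Algebra.trace L K (β*β)) :=
    Algebra.isIntegral_trace (hβint.mul hβint)
  have hddint : IsIntegral ℤ (Algebra.trace L K 1 * Algebra.trace L K (β*β)
      - Algebra.trace L K β * Algebra.trace L K β) := (hT0.mul hT2).sub (hT1.mul hT1)
  have hdd0 : Algebra.trace L K 1 * Algebra.trace L K (β*β)
      - Algebra.trace L K β * Algebra.trace L K β ≠ 0 := dd_ne B β hB
  set d : 𝓞 L := ⟨_, hddint⟩ with hd
  have hdR : d ∈ nonZeroDivisors (𝓞 L) := by
    refine mem_nonZeroDivisors_of_ne_zero (fun h => hdd0 ?_)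
    have h2 := congrArg (fun z : 𝓞 L => (z : L)) h
    exact h2
  have hfracb : IsFractional (nonZeroDivisors (𝓞 L)) Cb := by
    refine ⟨d, hdR, ?_⟩
    rintro _ ⟨x, hx, rfl⟩
    refine ⟨⟨Algebra.trace L K 1 * Algebra.trace L K (x*β)
        - Algebra.trace L K β * Algebra.trace L K x,
        (hT0.mul (Algebra.isIntegral_trace (hx.mul hβint))).sub
          (hT1.mul (Algebra.isIntegral_trace hx))⟩, ?_⟩
    rw [hRsm]
    exact (bval B β hB x).symm
  have hfracc : IsFractional (nonZeroDivisors (𝓞 L)) Cc := by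
    obtain ⟨a, haS, ha⟩ := hfracb
    exact ⟨a, haS, fun c hc => ha c (hCcCb hc)⟩
  let Ib : FractionalIdeal (nonZeroDivisors (𝓞 L)) L := ⟨Cb, hfracb⟩
  let Ic : FractionalIdeal (nonZeroDivisors (𝓞 L)) L := ⟨Cc, hfracc⟩
  have hcoeb : (Ib : Submodule (𝓞 L) L) = Cb := rfl
  have hcoec : (Ic : Submodule (𝓞 L) L) = Cc := rfl
  have h1Cb : (1:L) ∈ Cb := ⟨β, hβint, (repr_β' B β hB).2⟩
  have hIb0 : Ib ≠ 0 := by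
    intro h
    have h1 : (1:L) ∈ Ib := h1Cb
    rw [h] at h1
    exact one_ne_zero ((FractionalIdeal.mem_zero_iff _).mp h1)
  -- the conductor is Ic * Ib⁻¹
  have hcond : Submodule.span (𝓞 L) {u : L | IsIntegral ℤ u ∧
      ∀ y : K, IsIntegral ℤ y → algebraMap L K u * y ∈ O}
      = ((Ic * Ib⁻¹ : FractionalIdeal (nonZeroDivisors (𝓞 L)) L) : Submodule (𝓞 L) L) := by
    apply le_antisymm
    · rw [Submodule.span_le]
      rintro u ⟨hu1, hu2⟩
      have hs : FractionalIdeal.spanSingleton (nonZeroDivisors (𝓞 L)) u * Ib ≤ Ic := by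
        refine FractionalIdeal.mul_le.mpr ?_
        intro i hi j hj
        rw [FractionalIdeal.mem_spanSingleton] at hi
        obtain ⟨z, rfl⟩ := hi
        obtain ⟨y, hy, rfl⟩ := (show j ∈ Cb from hj)
        have hmem : u * B.repr y 1 ∈ Cc := by
          have hh : (fun x : K => B.repr x 1) (algebraMap L K u * y) = u * B.repr y 1 := hsm u y
          exact ⟨algebraMap L K u * y, hu2 y hy, hh⟩
        have : z • u * B.repr y 1 = z • (u * B.repr y 1) := by
          rw [smul_mul_assoc]
        rw [this]
        exact Submodule.smul_mem Cc z hmem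
      have hs2 : FractionalIdeal.spanSingleton (nonZeroDivisors (𝓞 L)) u ≤ Ic * Ib⁻¹ := by
        have h3 := (show Monotone (fun J => J * Ib⁻¹) from fun _ _ h => mul_le_mul_left h Ib⁻¹) hs
        dsimp only at h3
        rwa [mul_assoc, mul_inv_cancel₀ hIb0, mul_one] at h3
      exact hs2 (FractionalIdeal.mem_spanSingleton_self _ u)
    · intro v hv
      have hvmem : v ∈ Ic * Ib⁻¹ := hv
      apply Submodule.subset_span
      have hvint : IsIntegral ℤ v := by
        have hlc : Ic ≤ Ib := fun z hz => hCcCb hz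
        have hle1 : Ic * Ib⁻¹ ≤ 1 := by
          rw [← mul_inv_cancel₀ hIb0]
          exact mul_le_mul_left hlc Ib⁻¹
        obtain ⟨r, hr⟩ := (FractionalIdeal.mem_one_iff _).mp (hle1 hvmem)
        rw [← hr]
        exact RingOfIntegers.isIntegral_coe r
      refine ⟨hvint, ?_⟩
      intro y hy
      have h1 : v * B.repr y 1 ∈ Cc := by
        have hby : B.repr y 1 ∈ Ib := ⟨y, hy, rfl⟩
        have h2 := FractionalIdeal.mul_mem_mul hvmem hby
        rw [mul_assoc, mul_comm Ib⁻¹ Ib, mul_inv_cancel₀ hIb0, mul_one] at h2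
        exact h2
      obtain ⟨w, hwO, hwb⟩ := h1
      have hwb' : B.repr w 1 = v * B.repr y 1 := hwb
      have hzint : IsIntegral ℤ (algebraMap L K v * y - w) :=
        ((hintmap v hvint).mul hy).sub (hOint w hwO)
      have hbz : B.repr (algebraMap L K v * y - w) 1 = 0 := by
        rw [map_sub]
        simp only [Finsupp.sub_apply]
        rw [hsm, hwb']
        ring
      have hza : algebraMap L K v * y - w
          = algebraMap L K (B.repr (algebraMap L K v * y - w) 0) := by
        conv_lhs => rw [hx B β hB (algebraMap L K v * y - w)]
        rw [hbz, RingHom.map_zero, zero_mul, add_zero]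
      have haint : IsIntegral ℤ (B.repr (algebraMap L K v * y - w) 0) := by
        rw [hza] at hzint
        exact (isIntegral_algebraMap_iff (algebraMap L K).injective).mp hzint
      have hfin : algebraMap L K v * y = (algebraMap L K v * y - w) + w := by ring
      rw [hfin, hza]
      exact add_mem (hOL _ haint) hwO
  -- discSet spans as fractional ideals
  have hsq : ∀ (I : FractionalIdeal (nonZeroDivisors (𝓞 L)) L),
      Submodule.span (𝓞 L) ((fun c : L => (Algebra.trace L K 1 * Algebra.trace L K (β*β)
          - Algebra.trace L K β * Algebra.trace L K β) * (c*c)) '' ((I : Submodule (𝓞 L) L) : Set L))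
        = ((FractionalIdeal.spanSingleton (nonZeroDivisors (𝓞 L))
              (Algebra.trace L K 1 * Algebra.trace L K (β*β)
                - Algebra.trace L K β * Algebra.trace L K β) * (I * I)
            : FractionalIdeal (nonZeroDivisors (𝓞 L)) L) : Submodule (𝓞 L) L) := by
    intro I
    rw [FractionalIdeal.coe_mul, FractionalIdeal.coe_mul, FractionalIdeal.coe_spanSingleton,
      sq_span_submodule (I : Submodule (𝓞 L) L) I.isFractional, Submodule.span_mul_span,
      Set.singleton_mul, Set.image_image]
  have hmb := master B β hB {x : K | IsIntegral ℤ x} Cb rfl isIntegral_one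
    (fun x hxI => (hintmap _ (Algebra.isIntegral_trace hxI)).sub hxI)
    (fun x hxI y hyI => hxI.mul hyI)
  have hmc := master B β hB (O : Set K) Cc rfl (one_mem O)
    (fun x hxO => sub_mem (hOL _ (Algebra.isIntegral_trace (hOint x hxO))) hxO)
    (fun x hxO y hyO => mul_mem hxO hyO)
  rw [hmb, hmc, hcond, ← hcoeb, ← hcoec, hsq Ib, hsq Ic]
  rw [pow_two, ← FractionalIdeal.coe_mul, ← FractionalIdeal.coe_mul]
  congr 1
  have hinv : Ib⁻¹ * Ib = 1 := by
    rw [mul_comm]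
    exact mul_inv_cancel₀ hIb0
  have hre : Ic * Ib⁻¹ * (Ic * Ib⁻¹)
      * (FractionalIdeal.spanSingleton (nonZeroDivisors (𝓞 L))
          (Algebra.trace L K 1 * Algebra.trace L K (β*β)
            - Algebra.trace L K β * Algebra.trace L K β) * (Ib * Ib))
      = FractionalIdeal.spanSingleton (nonZeroDivisors (𝓞 L))
          (Algebra.trace L K 1 * Algebra.trace L K (β*β)
            - Algebra.trace L K β * Algebra.trace L K β) * (Ic * Ic)
        * ((Ib⁻¹ * Ib) * (Ib⁻¹ * Ib)) := by ring
  rw [hre, hinv, mul_one, mul_one]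
end

section
/- Let Λ be a free group on two generators and L ◁ Λ a normal subgroup of infinite index. If L is finitely generated then L is trivial; equivalently, every nontrivial finitely generated normal subgroup of a free group has finite index. -/
namespace KS

open FreeGroup Finsupp

abbrev FG2 := FreeGroup (Fin 2)

variable {Q : Type} [Group Q]

/-- Left translation action of `Q` on `(Q × Fin 2) →₀ ℤ`. -/
noncomputable def rho (q : Q) : ((Q × Fin 2) →₀ ℤ) ≃+ ((Q × Fin 2) →₀ ℤ) :=
  Finsupp.domCongr (Equiv.prodCongr (Equiv.mulLeft q) (Equiv.refl (Fin 2)))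

@[simp] lemma rho_apply (q : Q) (f : (Q × Fin 2) →₀ ℤ) (a : Q × Fin 2) :
    rho q f a = f (q⁻¹ * a.1, a.2) := by
  simp [rho, Finsupp.domCongr_apply, Finsupp.equivMapDomain_apply, Prod.map]

@[simp] lemma rho_single (q q' : Q) (x : Fin 2) (k : ℤ) :
    rho q (Finsupp.single (q', x) k) = Finsupp.single ((q * q', x)) k := by
  simp [rho, Finsupp.domCongr_apply, Finsupp.equivMapDomain_single]

/-- The action as a homomorphism into multiplicative automorphisms. -/
noncomputable def rhoHom : Q →* MulAut (Multiplicative ((Q × Fin 2) →₀ ℤ)) :=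
  MonoidHom.mk' (fun q => AddEquiv.toMultiplicative (rho q)) (by
    intro a b
    apply MulEquiv.ext; intro m
    show Multiplicative.ofAdd (rho (a * b) m.toAdd)
        = Multiplicative.ofAdd (rho a (rho b m.toAdd))
    congr 1
    ext p
    simp [mul_assoc])


variable (π : FG2 →* Q)

/-- The Magnus/Fox homomorphism into the semidirect product. -/
noncomputable def phi : FG2 →* Multiplicative ((Q × Fin 2) →₀ ℤ) ⋊[rhoHom] Q :=
  FreeGroup.lift (fun i =>
    ⟨Multiplicative.ofAdd (Finsupp.single ((1 : Q), i) (1 : ℤ)), π (FreeGroup.of i)⟩)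

lemma phi_right (u : FG2) : (phi π u).right = π u := by
  have : (SemidirectProduct.rightHom).comp (phi π) = π := by
    apply FreeGroup.ext_hom
    intro a
    simp [phi]
  exact congrFun (congrArg DFunLike.coe this) u

/-- The Fox derivative. -/
noncomputable def dd (u : FG2) : (Q × Fin 2) →₀ ℤ :=
  Multiplicative.toAdd ((phi π u).left)

lemma dd_mul (u v : FG2) : dd π (u * v) = dd π u + rho (π u) (dd π v) := by
  unfold dd
  rw [_root_.map_mul, SemidirectProduct.mul_left, phi_right]
  rfl

@[simp] lemma dd_one : dd π 1 = 0 := by simp [dd]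

lemma dd_mul_of_ker {u : FG2} (hu : π u = 1) (v : FG2) :
    dd π (u * v) = dd π u + dd π v := by
  rw [dd_mul, hu]
  congr 1
  ext p
  simp

lemma dd_inv_of_ker {u : FG2} (hu : π u = 1) : dd π u⁻¹ = - dd π u := by
  have h := dd_mul_of_ker π hu u⁻¹
  rw [mul_inv_cancel, dd_one] at h
  exact eq_neg_of_add_eq_zero_right h.symm


lemma dd_conj {n : FG2} (hn : π n = 1) (u : FG2) :
    dd π (u * n * u⁻¹) = rho (π u) (dd π n) := by
  rw [dd_mul, dd_mul, _root_.map_mul, hn, mul_one]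
  have h := dd_mul π u u⁻¹
  rw [mul_inv_cancel, dd_one] at h
  have hinv : rho (π u) (dd π u⁻¹) = - dd π u := eq_neg_of_add_eq_zero_right h.symm
  rw [hinv]
  abel


/-- Term of the Fox derivative contributed by one letter, with prefix class `q`. -/
noncomputable def letterTerm (q : Q) (p : Fin 2 × Bool) : (Q × Fin 2) →₀ ℤ :=
  if p.2 then Finsupp.single ((q, p.1)) 1
  else - Finsupp.single ((q * (π (FreeGroup.of p.1))⁻¹, p.1)) 1

lemma rho_letterTerm (q' q : Q) (p : Fin 2 × Bool) :
    rho q' (letterTerm π q p) = letterTerm π (q' * q) p := by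
  rcases p with ⟨x, b⟩
  cases b <;> simp [letterTerm, mul_assoc]

/-- The `i`-th term of the Fox derivative of the word `w`. -/
noncomputable def tm (w : List (Fin 2 × Bool)) (i : ℕ) : (Q × Fin 2) →₀ ℤ :=
  letterTerm π (π (FreeGroup.mk (w.take i))) (w.getD i default)

@[simp] lemma rho_rho (a b : Q) (f : (Q × Fin 2) →₀ ℤ) :
    rho a (rho b f) = rho (a * b) f := by
  ext p; simp [mul_assoc]

@[simp] lemma rho_one_apply (f : (Q × Fin 2) →₀ ℤ) : rho (1 : Q) f = f := by
  ext p; simp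

lemma dd_inv (u : FG2) : dd π u⁻¹ = - rho ((π u)⁻¹) (dd π u) := by
  have h := dd_mul π u u⁻¹
  rw [mul_inv_cancel, dd_one] at h
  have hinv : rho (π u) (dd π u⁻¹) = - dd π u := eq_neg_of_add_eq_zero_right h.symm
  have := congrArg (rho ((π u)⁻¹)) hinv
  rw [rho_rho, inv_mul_cancel, rho_one_apply] at this
  rw [this, map_neg]

lemma mk_single_false (x : Fin 2) :
    (FreeGroup.mk [(x, false)] : FG2) = (FreeGroup.of x)⁻¹ := by
  have h : (FreeGroup.of x : FG2) * FreeGroup.mk [(x, false)] = 1 := by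
    show FreeGroup.mk [(x, true)] * FreeGroup.mk [(x, false)] = 1
    rw [FreeGroup.mul_mk, FreeGroup.one_eq_mk]
    exact Quot.sound (FreeGroup.Red.Step.cons_not (b := true))
  exact eq_inv_of_mul_eq_one_right h

lemma dd_mk_single (p : Fin 2 × Bool) :
    dd π (FreeGroup.mk [p]) = letterTerm π 1 p := by
  rcases p with ⟨x, b⟩
  cases b
  · rw [mk_single_false]
    have h1 : dd π (FreeGroup.of x) = Finsupp.single ((1 : Q), x) 1 := by
      simp [dd, phi]
    rw [dd_inv, h1, letterTerm]
    simp
  · have : (FreeGroup.mk [(x, true)] : FG2) = FreeGroup.of x := rfl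
    rw [this]
    simp [dd, phi, letterTerm]


lemma mk_cons (p : Fin 2 × Bool) (t : List (Fin 2 × Bool)) :
    (FreeGroup.mk (p :: t) : FG2) = FreeGroup.mk [p] * FreeGroup.mk t := by
  rw [FreeGroup.mul_mk]; rfl

lemma tm_cons_succ (p : Fin 2 × Bool) (t : List (Fin 2 × Bool)) (i : ℕ) :
    tm π (p :: t) (i + 1) = rho (π (FreeGroup.mk [p])) (tm π t i) := by
  unfold tm
  rw [List.take_succ_cons, List.getD_cons_succ, mk_cons, _root_.map_mul, rho_letterTerm]

lemma dd_mk (w : List (Fin 2 × Bool)) :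
    dd π (FreeGroup.mk w) = ∑ i ∈ Finset.range w.length, tm π w i := by
  induction w with
  | nil =>
    show dd π (FreeGroup.mk []) = 0
    rw [← FreeGroup.one_eq_mk, dd_one]
  | cons p t ih =>
    rw [mk_cons, dd_mul, ih, List.length_cons, Finset.sum_range_succ']
    have h0 : tm π (p :: t) 0 = dd π (FreeGroup.mk [p]) := by
      unfold tm
      rw [dd_mk_single]
      simp only [List.take_zero, List.getD_cons_zero, ← FreeGroup.one_eq_mk, _root_.map_one]
    rw [h0, add_comm]
    congr 1
    rw [map_sum]
    exact Finset.sum_congr rfl fun i _ => (tm_cons_succ π p t i).symm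


theorem dd_ker_eq_zero [Infinite Q] (hsurj : Function.Surjective π) (hfg : π.ker.FG) :
    ∀ n ∈ π.ker, dd π n = 0 := by
  classical
  obtain ⟨S, hSc, hSf⟩ := (Subgroup.fg_iff π.ker).mp hfg
  set E : Set (Q × Fin 2) :=
    ⋃ s ∈ S, (((dd π s).support : Set (Q × Fin 2)) ∪ ((dd π s⁻¹).support : Set (Q × Fin 2)))
    with hE
  have hEfin : E.Finite :=
    hSf.biUnion fun s _ => (Finset.finite_toSet _).union (Finset.finite_toSet _)
  have hsup : ∀ n ∈ π.ker, ((dd π n).support : Set (Q × Fin 2)) ⊆ E := by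
    intro n hn
    rw [← hSc] at hn
    refine (Subgroup.closure_induction
      (p := fun x _ => x ∈ π.ker ∧ ((dd π x).support : Set (Q × Fin 2)) ⊆ E)
      ?_ ?_ ?_ ?_ hn).2
    · intro x hx
      refine ⟨hSc ▸ Subgroup.subset_closure hx, ?_⟩
      intro a ha
      exact Set.mem_biUnion hx (Set.mem_union_left _ ha)
    · simp
    · rintro x y hx hy ⟨hx1, hx2⟩ ⟨hy1, hy2⟩
      refine ⟨mul_mem hx1 hy1, ?_⟩
      rw [dd_mul_of_ker π hx1]
      intro a ha
      rcases Finset.mem_union.mp (Finsupp.support_add ha) with h | h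
      · exact hx2 h
      · exact hy2 h
    · rintro x hx ⟨hx1, hx2⟩
      refine ⟨inv_mem hx1, ?_⟩
      rw [dd_inv_of_ker π hx1]
      simpa using hx2
  -- now show every derivative vanishes
  intro n hn
  by_contra hne
  obtain ⟨a, ha⟩ := Finsupp.support_nonempty_iff.mpr hne
  have key : ∀ q : Q, (q * a.1, a.2) ∈ E := by
    intro q
    obtain ⟨u, hu⟩ := hsurj q
    have hmem : u * n * u⁻¹ ∈ π.ker := by
      have hn1 : π n = 1 := hn
      have : π (u * n * u⁻¹) = 1 := by
        simp [_root_.map_mul, hn1]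
      exact this
    have hc : dd π (u * n * u⁻¹) = rho q (dd π n) := by
      rw [dd_conj π hn, hu]
    apply hsup _ hmem
    rw [hc]
    simp only [Finset.mem_coe, Finsupp.mem_support_iff, rho_apply, inv_mul_cancel_left]
    simpa using ha
  have hinj : Function.Injective (fun q : Q => (q * a.1, a.2)) := by
    intro q q' h
    simpa using congrArg Prod.fst h
  exact (Set.infinite_of_injective_forall_mem hinj key) hEfin


section Reduced
variable {α : Type*} [DecidableEq α]

lemma reduce_take {w : List (α × Bool)} (h : FreeGroup.reduce w = w) (j : ℕ) :
    FreeGroup.reduce (w.take j) = w.take j := by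
  have h1 : FreeGroup.Red w (FreeGroup.reduce (w.take j) ++ w.drop j) := by
    conv_lhs => rw [← List.take_append_drop j w]
    exact FreeGroup.Red.append_append FreeGroup.reduce.red FreeGroup.Red.refl
  have h2 : FreeGroup.reduce w = FreeGroup.reduce (w.take j) ++ w.drop j :=
    FreeGroup.reduce.min (by rw [h]; exact h1)
  rw [h] at h2
  have h3 : w.take j ++ w.drop j = FreeGroup.reduce (w.take j) ++ w.drop j := by
    rw [List.take_append_drop]; exact h2
  exact (List.append_cancel_right h3).symm

lemma reduce_drop {w : List (α × Bool)} (h : FreeGroup.reduce w = w) (j : ℕ) :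
    FreeGroup.reduce (w.drop j) = w.drop j := by
  have h1 : FreeGroup.Red w (w.take j ++ FreeGroup.reduce (w.drop j)) := by
    conv_lhs => rw [← List.take_append_drop j w]
    exact FreeGroup.Red.append_append FreeGroup.Red.refl FreeGroup.reduce.red
  have h2 : FreeGroup.reduce w = w.take j ++ FreeGroup.reduce (w.drop j) :=
    FreeGroup.reduce.min (by rw [h]; exact h1)
  rw [h] at h2
  have h3 : w.take j ++ w.drop j = w.take j ++ FreeGroup.reduce (w.drop j) := by
    rw [List.take_append_drop]; exact h2
  exact (List.append_cancel_left h3).symm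

end Reduced

theorem aux {Q : Type} [Group Q] [Infinite Q] (π : FG2 →* Q)
    (hsurj : Function.Surjective π) (hfg : π.ker.FG) (hne : π.ker ≠ ⊥) : False := by
  classical
  have hz := dd_ker_eq_zero π hsurj hfg
  -- a minimal-length nontrivial element of the kernel
  have hex0 : ∃ n : FG2, n ∈ π.ker ∧ n ≠ 1 := by
    by_contra h
    push_neg at h
    exact hne ((Subgroup.eq_bot_iff_forall _).mpr h)
  obtain ⟨n₀, hn₀, hn₀1⟩ := hex0
  have hex : ∃ k : ℕ, ∃ n : FG2, (n ∈ π.ker ∧ n ≠ 1) ∧ FreeGroup.norm n = k :=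
    ⟨_, n₀, ⟨hn₀, hn₀1⟩, rfl⟩
  set ℓ := Nat.find hex with hℓ
  obtain ⟨n, ⟨hnk, hn1⟩, hnl⟩ := Nat.find_spec hex
  have hmin : ∀ m : FG2, m ∈ π.ker → m ≠ 1 → ℓ ≤ FreeGroup.norm m :=
    fun m hm hm1 => Nat.find_min' hex ⟨m, ⟨hm, hm1⟩, rfl⟩
  set w := FreeGroup.toWord n with hw
  have hmkw : FreeGroup.mk w = n := FreeGroup.mk_toWord
  have hred : FreeGroup.reduce w = w := FreeGroup.reduce_toWord n
  have hlen : w.length = ℓ := hnl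
  have hwne : w ≠ [] := fun h => hn1 (FreeGroup.toWord_eq_nil_iff.mp (hw ▸ h))
  have hl0 : 0 < ℓ := hlen ▸ List.length_pos_iff.mpr hwne
  -- no nontrivial kernel element from a short reduced word
  have hpref : ∀ v : List (Fin 2 × Bool), FreeGroup.reduce v = v → v ≠ [] →
      v.length < ℓ → FreeGroup.mk v ∉ π.ker := by
    intro v hv hvne hvl hmem
    have h1 : FreeGroup.mk v ≠ 1 := by
      intro h
      apply hvne
      have h2 := congrArg FreeGroup.toWord h
      rwa [FreeGroup.toWord_mk, hv, FreeGroup.toWord_one] at h2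
    have h3 := hmin _ hmem h1
    have h4 : FreeGroup.norm (FreeGroup.mk v) = v.length := by
      show (FreeGroup.mk v).toWord.length = v.length
      rw [FreeGroup.toWord_mk, hv]
    omega
  -- cyclic reducedness of the minimal element
  have hcyc : 2 ≤ ℓ → w.getD (ℓ-1) default ≠ ((w.getD 0 default).1, !(w.getD 0 default).2) := by
    intro h2 heq
    set x := (w.getD 0 default).1 with hx
    set b := (w.getD 0 default).2 with hb
    have htne : w.tail ≠ [] := by
      have : w.tail.length = ℓ - 1 := by rw [List.length_tail, hlen]
      intro h; rw [h] at this; simp at this; omega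
    have hdecomp : w = (x, b) :: (w.tail.dropLast ++ [(x, !b)]) := by
      conv_lhs => rw [← List.cons_head_tail hwne]
      congr 1
      · rw [hx, hb]
        have : w.getD 0 default = w.head hwne := by
          conv_lhs => rw [← List.cons_head_tail hwne]
          rfl
        rw [this]
      · conv_lhs => rw [← List.dropLast_append_getLast htne]
        congr 1
        rw [← heq]
        have hlt' : ℓ - 1 < w.length := by rw [hlen]; omega
        have htlen : w.tail.length = ℓ - 1 := by rw [List.length_tail, hlen]
        have hlt'' : w.tail.length - 1 + 1 < w.length := by
          rw [htlen, hlen]; omega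
        rw [List.getLast_eq_getElem, List.getD_eq_getElem w default hlt',
          List.getElem_tail]
        simp only [htlen]
        have : ℓ - 1 - 1 + 1 = ℓ - 1 := by omega
        simp only [this]
    set t := w.tail.dropLast with ht
    have hprod : (FreeGroup.mk [(x,!b)] : FG2) * FreeGroup.mk [(x,b)] = 1 := by
      rw [FreeGroup.mul_mk, FreeGroup.one_eq_mk]
      exact Quot.sound FreeGroup.Red.Step.cons_not_rev
    have hlist : (([(x,!b)] ++ w) ++ [(x,b)] : List (Fin 2 × Bool))
        = (x,!b) :: (x,b) :: (t ++ [(x,!b),(x,b)]) := by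
      rw [hdecomp]
      simp
    have hconj : (FreeGroup.mk [(x,!b)] : FG2) * n * FreeGroup.mk [(x,b)] = FreeGroup.mk t := by
      rw [← hmkw, FreeGroup.mul_mk, FreeGroup.mul_mk, hlist]
      have hstep1 : FreeGroup.mk ((x, !b) :: (x, b) :: (t ++ [(x, !b), (x, b)]))
          = FreeGroup.mk (t ++ [(x,!b),(x,b)]) := Quot.sound FreeGroup.Red.Step.cons_not_rev
      have hstep2 : FreeGroup.mk (t ++ [(x,!b),(x,b)]) = FreeGroup.mk t := by
        have h : (FreeGroup.mk (t ++ (x, !b) :: (x, b) :: []) : FG2) = FreeGroup.mk (t ++ []) :=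
          Quot.sound (FreeGroup.Red.Step.not_rev
          (L₁ := t) (L₂ := ([] : List (Fin 2 × Bool))) (x := x) (b := b))
        simpa using h
      rw [hstep1, hstep2]
    have hker' : FreeGroup.mk t ∈ π.ker := by
      rw [← hconj]
      show π _ = 1
      rw [_root_.map_mul, _root_.map_mul]
      have hn1' : π n = 1 := hnk
      rw [hn1', mul_one, ← _root_.map_mul, hprod, _root_.map_one]
    have hne' : FreeGroup.mk t ≠ 1 := by
      rw [← hconj]
      intro h
      apply hn1
      have hinv2 : (FreeGroup.mk [(x,b)] : FG2) = (FreeGroup.mk [(x,!b)])⁻¹ :=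
        eq_inv_of_mul_eq_one_right hprod
      have hn' : n = (FreeGroup.mk [(x,!b)] : FG2)⁻¹ * (FreeGroup.mk [(x,b)])⁻¹ := by
        calc n = (FreeGroup.mk [(x,!b)] : FG2)⁻¹
              * (FreeGroup.mk [(x,!b)] * n * FreeGroup.mk [(x,b)])
              * (FreeGroup.mk [(x,b)])⁻¹ := by group
        _ = (FreeGroup.mk [(x,!b)] : FG2)⁻¹ * (FreeGroup.mk [(x,b)])⁻¹ := by rw [h]; group
      rw [hn', hinv2, inv_inv]
      exact inv_mul_cancel _
    have hlt : FreeGroup.norm (FreeGroup.mk t) < ℓ := by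
      have h1 : FreeGroup.norm (FreeGroup.mk t) ≤ t.length := FreeGroup.norm_mk_le
      have h2 : t.length = ℓ - 2 := by
        rw [ht, List.length_dropLast, List.length_tail, hlen]
        omega
      omega
    exact absurd (hmin _ hker' hne') (by omega)
  -- the vanishing derivative of `n`, as a sum over the word `w`
  have hdn : (∑ i ∈ Finset.range ℓ, tm π w i) = 0 := by
    rw [← hlen, ← dd_mk, hmkw]
    exact hz n hnk
  set h0 := w.getD 0 default with hh0
  set x := h0.1 with hx
  have htm0 : tm π w 0 = letterTerm π 1 h0 := by
    unfold tm
    rw [List.take_zero, ← FreeGroup.one_eq_mk, _root_.map_one]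
  -- sum of coefficients at any key vanishes
  have hksum : ∀ k : Q × Fin 2, ∑ i ∈ Finset.range ℓ, (tm π w i) k = 0 := by
    intro k
    rw [← Finsupp.finset_sum_apply, hdn]
    rfl
  -- a term of the opposite sign to the first term exists
  have hother : ∀ k : Q × Fin 2, ∀ s : ℤ, (tm π w 0) k = s → (s = 1 ∨ s = -1) →
      ∃ i, i < ℓ ∧ i ≠ 0 ∧ (tm π w i) k * s < 0 := by
    intro k s h0k hs
    by_contra hno
    push_neg at hno
    have hsum := hksum k
    rw [← Finset.sum_erase_add _ _ (Finset.mem_range.mpr hl0)] at hsum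
    rcases hs with hs | hs
    all_goals {
      have hge : ∀ i ∈ (Finset.range ℓ).erase 0, 0 ≤ (tm π w i) k * s := by
        intro i hi
        rcases Finset.mem_erase.mp hi with ⟨hi0, hir⟩
        have := hno i (Finset.mem_range.mp hir) hi0
        omega
      have hsumge : 0 ≤ ∑ i ∈ (Finset.range ℓ).erase 0, (tm π w i) k * s := 
        Finset.sum_nonneg hge
      rw [← Finset.sum_mul, hs] at hsumge
      rw [h0k, hs] at hsum
      omega
    }
  -- case analysis on the sign of the first letter
  cases hb : h0.2 with
  | true =>
    have h0k : (tm π w 0) ((1:Q), x) = 1 := by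
      rw [htm0]
      simp [letterTerm, hb, hx, Finsupp.single_apply]
    obtain ⟨i, hiℓ, hi0, hineg⟩ := hother ((1:Q), x) 1 h0k (Or.inl rfl)
    have hineg' : (tm π w i) ((1:Q), x) < 0 := by omega
    set p := w.getD i default with hp
    cases hbp : p.2 with
    | true =>
      have hge : (0:ℤ) ≤ (tm π w i) ((1:Q), x) := by
        rw [show tm π w i = letterTerm π (π (FreeGroup.mk (w.take i))) p from rfl]
        simp only [letterTerm, hbp, if_true, Finsupp.single_apply]
        split_ifs <;> norm_num
      omega
    | false =>
      have htmi : tm π w i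
          = - Finsupp.single ((π (FreeGroup.mk (w.take i)) * (π (FreeGroup.of p.1))⁻¹, p.1)) 1 := by
        rw [show tm π w i = letterTerm π (π (FreeGroup.mk (w.take i))) p from rfl]
        simp [letterTerm, hbp]
      rw [htmi] at hineg'
      have hkey : ((π (FreeGroup.mk (w.take i)) * (π (FreeGroup.of p.1))⁻¹, p.1) : Q × Fin 2)
          = ((1:Q), x) := by
        by_contra hkne
        rw [Finsupp.neg_apply, Finsupp.single_apply, if_neg hkne] at hineg'
        simp at hineg'
      have hp1 : p.1 = x := congrArg Prod.snd hkey
      have hq1 : π (FreeGroup.mk (w.take i)) * (π (FreeGroup.of p.1))⁻¹ = 1 :=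
        congrArg Prod.fst hkey
      have hiw : i < w.length := by rw [hlen]; exact hiℓ
      have hpget : w[i] = p := by rw [hp, List.getD_eq_getElem w default hiw]
      have htake1 : w.take (i+1) = w.take i ++ [p] := by
        rw [List.take_succ, List.getElem?_eq_getElem hiw, hpget]
        rfl
      have hpfull : p = (p.1, false) := Prod.ext_iff.mpr ⟨rfl, hbp⟩
      have hmk1 : FreeGroup.mk (w.take (i+1))
          = FreeGroup.mk (w.take i) * (FreeGroup.of p.1)⁻¹ := by
        rw [htake1, ← FreeGroup.mul_mk, ← mk_single_false p.1, ← hpfull]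
      have hker2 : FreeGroup.mk (w.take (i+1)) ∈ π.ker := by
        show π _ = 1
        rw [hmk1, _root_.map_mul, _root_.map_inv]
        exact hq1
      have hlen2 : (w.take (i+1)).length = i+1 := by
        rw [List.length_take]
        omega
      have hi1 : i + 1 = ℓ := by
        by_contra hne2
        have hlt2 : (w.take (i+1)).length < ℓ := by omega
        refine hpref _ (reduce_take hred (i+1)) ?_ hlt2 hker2
        intro hnil
        rw [hnil] at hlen2
        simp at hlen2
      have h2ℓ : 2 ≤ ℓ := by omega
      apply hcyc h2ℓ
      have hieq : ℓ - 1 = i := by omega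
      rw [hieq, ← hp]
      exact Prod.ext_iff.mpr ⟨hp1, by rw [hb]; exact hbp⟩
  | false =>
    have h0k : (tm π w 0) (((π (FreeGroup.of x))⁻¹ : Q), x) = -1 := by
      rw [htm0]
      simp [letterTerm, hb, hx, Finsupp.single_apply]
    obtain ⟨i, hiℓ, hi0, hineg⟩ :=
      hother (((π (FreeGroup.of x))⁻¹ : Q), x) (-1) h0k (Or.inr rfl)
    have hipos : 0 < (tm π w i) (((π (FreeGroup.of x))⁻¹ : Q), x) := by omega
    set p := w.getD i default with hp
    cases hbp : p.2 with
    | false =>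
      have hle : (tm π w i) (((π (FreeGroup.of x))⁻¹ : Q), x) ≤ 0 := by
        rw [show tm π w i = letterTerm π (π (FreeGroup.mk (w.take i))) p from rfl]
        simp only [letterTerm, hbp, if_false, Finsupp.neg_apply, Finsupp.single_apply,
          Bool.false_eq_true]
        split_ifs <;> norm_num
      omega
    | true =>
      have htmi : tm π w i = Finsupp.single ((π (FreeGroup.mk (w.take i)), p.1)) 1 := by
        rw [show tm π w i = letterTerm π (π (FreeGroup.mk (w.take i))) p from rfl]
        simp [letterTerm, hbp]
      rw [htmi] at hipos
      have hkey : ((π (FreeGroup.mk (w.take i)), p.1) : Q × Fin 2)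
          = (((π (FreeGroup.of x))⁻¹ : Q), x) := by
        by_contra hkne
        rw [Finsupp.single_apply, if_neg hkne] at hipos
        simp at hipos
      have hp1 : p.1 = x := congrArg Prod.snd hkey
      have hq1 : π (FreeGroup.mk (w.take i)) = (π (FreeGroup.of x))⁻¹ :=
        congrArg Prod.fst hkey
      have hw0 : w = (x, false) :: w.tail := by
        conv_lhs => rw [← List.cons_head_tail hwne]
        congr 1
        have hh : w.getD 0 default = w.head hwne := by
          conv_lhs => rw [← List.cons_head_tail hwne]
          rfl
        rw [← hh, ← hh0]
        exact Prod.ext_iff.mpr ⟨hx.symm, hb⟩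
      have hipos' : 1 ≤ i := by omega
      have htake : w.take i = (x,false) :: w.tail.take (i-1) := by
        obtain ⟨j, rfl⟩ : ∃ j, i = j + 1 := ⟨i - 1, by omega⟩
        conv_lhs => rw [hw0]
        rw [List.take_succ_cons]
        simp
      have hcanc : (FreeGroup.of x : FG2) * FreeGroup.mk (w.take i)
          = FreeGroup.mk (w.tail.take (i-1)) := by
        show FreeGroup.mk [(x,true)] * _ = _
        rw [FreeGroup.mul_mk, htake]
        exact Quot.sound (FreeGroup.Red.Step.cons_not (x := x) (b := true))
      have hkv : FreeGroup.mk (w.tail.take (i-1)) ∈ π.ker := by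
        rw [← hcanc]
        show π _ = 1
        rw [_root_.map_mul, hq1, mul_inv_cancel]
      by_cases hi1 : i = 1
      · -- adjacent cancelling pair contradicts reducedness
        have htne : w.tail ≠ [] := by
          have hl2 : 2 ≤ ℓ := by omega
          have : w.tail.length = ℓ - 1 := by rw [List.length_tail, hlen]
          intro hcon
          rw [hcon] at this
          simp at this
          omega
        have hw1 : w.tail = (x,true) :: w.tail.tail := by
          conv_lhs => rw [← List.cons_head_tail htne]
          congr 1
          have hh : w.tail.getD 0 default = w.tail.head htne := by
            conv_lhs => rw [← List.cons_head_tail htne]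
            rfl
          rw [← hh]
          calc w.tail.getD 0 default = w.getD 1 default := by
                conv_rhs => rw [hw0]
                rw [List.getD_cons_succ]
            _ = p := by rw [hp, hi1]
            _ = (x, true) := Prod.ext_iff.mpr ⟨hp1, hbp⟩
        exact FreeGroup.reduce.not (p := False)
          (show FreeGroup.reduce w = [] ++ (x,false) :: (x,!false) :: w.tail.tail by
            rw [hred]
            conv_lhs => rw [hw0, hw1]
            rfl)
      · have hvred : FreeGroup.reduce (w.tail.take (i-1)) = w.tail.take (i-1) := by
          have h1 : FreeGroup.reduce w.tail = w.tail := by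
            rw [← List.drop_one]
            exact reduce_drop hred 1
          exact reduce_take h1 (i-1)
        have hvlen : (w.tail.take (i-1)).length = i - 1 := by
          rw [List.length_take, List.length_tail, hlen]
          omega
        refine hpref _ hvred ?_ ?_ hkv
        · intro hcon
          rw [hcon] at hvlen
          simp at hvlen
          omega
        · omega

end KS

/-- Karrass–Solitar. Every finitely generated normal subgroup of infinite
index in a free group on two generators is trivial; equivalently, every nontrivial finitely
generated normal subgroup of a free group has finite index.  (In Mathlib, `L.index = 0` means
that `L` has infinite index.) -/
theorem stmt_11 (L : Subgroup (FreeGroup (Fin 2))) (hN : L.Normal)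
    (hfg : Subgroup.FG L) (hidx : L.index = 0) : L = ⊥ := by
  by_contra hne
  haveI := hN
  haveI : Infinite (FreeGroup (Fin 2) ⧸ L) := Subgroup.index_eq_zero_iff_infinite.mp hidx
  refine KS.aux (QuotientGroup.mk' L) (QuotientGroup.mk'_surjective L) ?_ ?_
  · rw [QuotientGroup.ker_mk']
    exact hfg
  · rw [QuotientGroup.ker_mk']
    exact hne
end

section
/- Let h₂ : ℝ → ℝ be continuous with |h₂(r)| ≤ C·|r|^k near 0 for some k ≥ 2/ε and bounded with rapid decay, and let 0 < θ ≤ π/2 with θ ≥ T^{-1+ε}. Then for T sufficiently large, |∫_{-∞}^{∞} (cosh((π-2θ)Tr)/cosh(πTr)) · h₂(r) dr| = O(T^{-2}), where the implied constant is independent of θ and T. -/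
open Real MeasureTheory Set

lemma cosh_le_exp_abs (x : ℝ) : Real.cosh x ≤ Real.exp |x| := by
  rw [Real.cosh_eq]
  have h1 : Real.exp x ≤ Real.exp |x| := Real.exp_le_exp.2 (le_abs_self x)
  have h2 : Real.exp (-x) ≤ Real.exp |x| := Real.exp_le_exp.2 (neg_le_abs x)
  linarith

lemma exp_abs_le_two_cosh (x : ℝ) : Real.exp |x| ≤ 2 * Real.cosh x := by
  rw [Real.cosh_eq]
  rcases abs_cases x with ⟨h, _⟩ | ⟨h, _⟩ <;> rw [h] <;>
    [linarith [(Real.exp_pos (-x)).le]; linarith [(Real.exp_pos x).le]]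

/-- Let `h₂ : ℝ → ℝ` be continuous, with `|h₂ r| ≤ C |r|^k` near `0` for some
`k ≥ 2/ε`, and bounded with rapid decay.  Then for `T` sufficiently large, uniformly over
`θ ∈ [T^{-1+ε}, π/2]`,
`|∫ r, cosh((π-2θ)Tr)/cosh(πTr) · h₂ r dr| = O(T^{-2})`,
with implied constant independent of `θ` and `T`. -/
theorem stmt_12 (ε : ℝ) (hε : 0 < ε) (hε1 : ε < 1)
    (h₂ : ℝ → ℝ) (hcont : Continuous h₂)
    (k C : ℝ) (hk : 2 / ε ≤ k) (hC : 0 < C)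
    (hnear : ∀ r : ℝ, |r| ≤ 1 → |h₂ r| ≤ C * |r| ^ k)
    (hdecay : ∀ N : ℕ, ∃ D : ℝ, ∀ r : ℝ, |h₂ r| * (1 + |r|) ^ N ≤ D) :
    ∃ (C' T₀ : ℝ), 0 < C' ∧ ∀ T ≥ T₀, ∀ θ : ℝ,
      T ^ (-1 + ε : ℝ) ≤ θ → θ ≤ Real.pi / 2 →
      |∫ r : ℝ, Real.cosh ((Real.pi - 2 * θ) * T * r) / Real.cosh (Real.pi * T * r) * h₂ r|
        ≤ C' / T ^ 2 := by
  obtain ⟨D, hD⟩ := hdecay 0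
  have hk0 : 0 < k := lt_of_lt_of_le (by positivity) hk
  have hεk : 2 ≤ ε * k := by
    rw [div_le_iff₀ hε] at hk; linarith
  set M : ℝ := max C D with hMdef
  have hM0 : 0 < M := lt_of_lt_of_le hC (le_max_left _ _)
  have hh : ∀ r : ℝ, |h₂ r| ≤ M * |r| ^ k := by
    intro r
    rcases le_or_gt |r| 1 with h | h
    · exact (hnear r h).trans (mul_le_mul_of_nonneg_right (le_max_left _ _) (by positivity))
    · have h1 : |h₂ r| ≤ D := by simpa using hD r
      have h2 : (1 : ℝ) ≤ |r| ^ k := Real.one_le_rpow h.le hk0.le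
      have h3 : D ≤ M := le_max_right _ _
      calc |h₂ r| ≤ D := h1
        _ = D * 1 := (mul_one D).symm
        _ ≤ M * |r| ^ k := by
            apply mul_le_mul h3 h2 one_pos.le hM0.le
  refine ⟨4 * M * Real.Gamma (k + 1), 1, by positivity, ?_⟩
  intro T hT θ hθ1 hθ2
  have hT0 : 0 < T := lt_of_lt_of_le one_pos hT
  have hθ0 : 0 < θ := lt_of_lt_of_le (Real.rpow_pos_of_pos hT0 _) hθ1
  set c : ℝ := 2 * θ * T with hcdef
  have hc0 : 0 < c := by positivity
  set G : ℝ → ℝ := fun x => |x| ^ k * Real.exp (-(c * |x|)) with hGdef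
  -- kernel bound
  have hker : ∀ r : ℝ,
      |Real.cosh ((Real.pi - 2 * θ) * T * r) / Real.cosh (Real.pi * T * r)|
        ≤ 2 * Real.exp (-(c * |r|)) := by
    intro r
    have ha : 0 ≤ Real.pi - 2 * θ := by linarith
    have hden : 0 < Real.cosh (Real.pi * T * r) := Real.cosh_pos _
    rw [abs_div, abs_of_pos (Real.cosh_pos _), abs_of_pos hden]
    have h1 : Real.cosh ((Real.pi - 2 * θ) * T * r)
        ≤ Real.exp ((Real.pi - 2 * θ) * T * |r|) := by
      have := cosh_le_exp_abs ((Real.pi - 2 * θ) * T * r)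
      rwa [abs_mul, abs_of_nonneg (by positivity : (0:ℝ) ≤ (Real.pi - 2 * θ) * T)] at this
    have h2 : Real.exp (Real.pi * T * |r|) / 2 ≤ Real.cosh (Real.pi * T * r) := by
      have := exp_abs_le_two_cosh (Real.pi * T * r)
      rw [abs_mul, abs_of_nonneg (by positivity : (0:ℝ) ≤ Real.pi * T)] at this
      linarith
    calc Real.cosh ((Real.pi - 2 * θ) * T * r) / Real.cosh (Real.pi * T * r)
        ≤ Real.exp ((Real.pi - 2 * θ) * T * |r|) / (Real.exp (Real.pi * T * |r|) / 2) := by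
          apply div_le_div₀ (Real.exp_pos _).le h1 (by positivity) h2
      _ = 2 * Real.exp ((Real.pi - 2 * θ) * T * |r| - Real.pi * T * |r|) := by
          rw [div_div_eq_mul_div, Real.exp_sub]
          ring
      _ = 2 * Real.exp (-(c * |r|)) := by
          congr 1
          rw [hcdef]
          ring
  -- integrability
  have hIoi : IntegrableOn (fun t : ℝ => t ^ k * Real.exp (-(c * t))) (Ioi 0) := by
    have := integrableOn_rpow_mul_exp_neg_mul_rpow (by linarith : (-1:ℝ) < k) (zero_lt_one' ℝ) hc0
    refine this.congr_fun (fun x _ => ?_) measurableSet_Ioi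
    beta_reduce
    rw [Real.rpow_one, neg_mul]
  have hGIoi : IntegrableOn G (Ioi 0) := by
    refine hIoi.congr_fun (fun x hx => ?_) measurableSet_Ioi
    rw [hGdef]
    simp only [abs_of_pos (mem_Ioi.mp hx)]
  have hGIic : IntegrableOn G (Iic 0) := by
    rw [← Measure.map_neg_eq_self (volume : Measure ℝ)]
    have m : MeasurableEmbedding fun x : ℝ => -x := (Homeomorph.neg ℝ).measurableEmbedding
    rw [m.integrableOn_map_iff]
    have : (G ∘ fun x : ℝ => -x) = G := by
      funext x; simp [hGdef, Function.comp]
    rw [this]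
    simp only [neg_preimage, neg_Iic, neg_zero]
    exact Iff.mpr integrableOn_Ici_iff_integrableOn_Ioi hGIoi
  have hGint : Integrable G := by
    rw [← integrableOn_univ, ← Iic_union_Ioi (a := (0:ℝ)), integrableOn_union]
    exact ⟨hGIic, hGIoi⟩
  -- pointwise bound on the integrand
  set f : ℝ → ℝ := fun r =>
    Real.cosh ((Real.pi - 2 * θ) * T * r) / Real.cosh (Real.pi * T * r) * h₂ r with hfdef
  have hfb : ∀ r : ℝ, |f r| ≤ 2 * M * G r := by
    intro r
    rw [hfdef, abs_mul]
    calc |Real.cosh ((Real.pi - 2 * θ) * T * r) / Real.cosh (Real.pi * T * r)| * |h₂ r|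
        ≤ (2 * Real.exp (-(c * |r|))) * (M * |r| ^ k) := by
          apply mul_le_mul (hker r) (hh r) (abs_nonneg _) (by positivity)
      _ = 2 * M * G r := by rw [hGdef]; ring
  have hfcont : Continuous f := by
    apply Continuous.mul _ hcont
    exact Continuous.div (by fun_prop) (by fun_prop) (fun x => (Real.cosh_pos _).ne')
  have hfint : Integrable f := by
    refine (hGint.const_mul (2 * M)).mono' hfcont.aestronglyMeasurable ?_
    filter_upwards with r
    simpa using hfb r
  -- putting it together
  have h1 : |∫ r : ℝ, f r| ≤ ∫ r : ℝ, 2 * M * G r := by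
    have ha : |∫ r : ℝ, f r| ≤ ∫ r : ℝ, |f r| := by
      simpa [Real.norm_eq_abs] using norm_integral_le_integral_norm (μ := volume) f
    exact ha.trans (integral_mono hfint.abs (hGint.const_mul _) hfb)
  have h2 : ∫ r : ℝ, 2 * M * G r
      = 4 * M * Real.Gamma (k + 1) * (1 / c) ^ (k + 1) := by
    rw [integral_const_mul]
    have habs : ∫ r : ℝ, G r
        = 2 * ∫ t in Ioi (0:ℝ), t ^ k * Real.exp (-(c * t)) := by
      rw [hGdef]
      rw [integral_comp_abs (f := fun t : ℝ => t ^ k * Real.exp (-(c * t)))]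
    rw [habs]
    have hgam := Real.integral_rpow_mul_exp_neg_mul_Ioi
      (by linarith : (0:ℝ) < k + 1) hc0
    rw [show k + 1 - 1 = k by ring] at hgam
    rw [hgam]
    ring
  have h3 : (1 / c) ^ (k + 1 : ℝ) ≤ 1 / T ^ 2 := by
    have hTε : (1:ℝ) ≤ T ^ (ε : ℝ) := Real.one_le_rpow hT hε.le
    have hcge : T ^ (ε : ℝ) ≤ c := by
      have : T ^ (-1 + ε : ℝ) * T ≤ θ * T :=
        mul_le_mul_of_nonneg_right hθ1 hT0.le
      have heq : T ^ (-1 + ε : ℝ) * T ^ (1:ℝ) = T ^ (ε : ℝ) := by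
        rw [← Real.rpow_add hT0]
        norm_num
      rw [Real.rpow_one] at heq
      rw [heq] at this
      rw [hcdef]; nlinarith
    have hpow : T ^ (2:ℝ) ≤ c ^ (k + 1 : ℝ) := by
      calc T ^ (2:ℝ) ≤ T ^ (ε * (k + 1)) := by
            apply Real.rpow_le_rpow_of_exponent_le hT
            nlinarith
        _ = (T ^ (ε:ℝ)) ^ (k + 1 : ℝ) := by
            rw [← Real.rpow_mul hT0.le]
        _ ≤ c ^ (k + 1 : ℝ) := by
            apply Real.rpow_le_rpow (by positivity) hcge (by linarith)
    rw [one_div, Real.inv_rpow hc0.le, ← one_div]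
    rw [div_le_div_iff₀ (by positivity) (by positivity)]
    have hT2 : T ^ (2:ℝ) = T ^ (2:ℕ) := by
      rw [← Real.rpow_natCast]; norm_num
    rw [hT2] at hpow
    linarith
  refine le_trans h1 ?_
  calc ∫ r : ℝ, 2 * M * G r
      = 4 * M * Real.Gamma (k + 1) * (1 / c) ^ (k + 1) := h2
    _ ≤ 4 * M * Real.Gamma (k + 1) * (1 / T ^ 2) := by
        apply mul_le_mul_of_nonneg_left h3 (by positivity)
    _ = 4 * M * Real.Gamma (k + 1) / T ^ 2 := by ring
end

section
/- Let Γ be an irreducible cocompact lattice in PSL(2,ℝ)^d derived from a maximal order R in a quaternion algebra over a totally real field L of degree n ≥ d (ramified at all real places beyond the first d). Then for the trace set Tr(Γ) = {(tr γ₁, ..., tr γ_d) : γ ∈ Γ} ⊂ ℝ^d and any x ∈ ℝ^d and T₁,...,T_d > 0: #{t ∈ Tr(Γ) : |t_j - x_j| ≤ T_j for all j} ≤ 1 + 2^{2n-d} T₁⋯T_d. -/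
open scoped Quaternion BigOperators

lemma one_le_prod_abs_embeddings {L : Type*} [Field L] [NumberField L]
    (n : ℕ) (hn : Module.finrank ℚ L = n)
    (ι : Fin n → (L →+* ℝ)) (hι : Function.Injective ι)
    (u : L) (hu : u ≠ 0) (hint : IsIntegral ℤ u) :
    1 ≤ ∏ j, |ι j u| := by
  classical
  let σ : Fin n → (L →ₐ[ℚ] ℂ) := fun j => (Complex.ofRealHom.comp (ι j)).toRatAlgHom
  have hσinj : Function.Injective σ := by
    intro a b hab
    apply hι
    have : Complex.ofRealHom.comp (ι a) = Complex.ofRealHom.comp (ι b) :=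
      congr_arg AlgHom.toRingHom hab
    ext z
    have := congr_arg (fun f => f z) this
    simpa using Complex.ofReal_injective (by simpa using this)
  have hcard : Fintype.card (L →ₐ[ℚ] ℂ) = n := by
    rw [AlgHom.card]; exact hn
  have hσbij : Function.Bijective σ :=
    (Fintype.bijective_iff_injective_and_card σ).mpr ⟨hσinj, by simp [hcard]⟩
  let e := Equiv.ofBijective σ hσbij
  have hnorm : (algebraMap ℚ ℂ) (Algebra.norm ℚ u) = ∏ j, σ j u := by
    rw [Algebra.norm_eq_prod_embeddings]
    exact (e.prod_comp fun τ => τ u).symm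
  have habs : |((Algebra.norm ℚ u : ℚ) : ℝ)| = ∏ j, |ι j u| := by
    have h0 := congr_arg (fun z : ℂ => ‖z‖) hnorm
    simp only [norm_prod] at h0
    have h1 : ‖((algebraMap ℚ ℂ) (Algebra.norm ℚ u))‖
        = |((Algebra.norm ℚ u : ℚ) : ℝ)| := by
      rw [eq_ratCast, ← Complex.ofReal_ratCast, Complex.norm_real, Real.norm_eq_abs]
    have h2 : ∀ j, ‖(σ j u)‖ = |ι j u| := by
      intro j
      show ‖((ι j u : ℝ) : ℂ)‖ = |ι j u|
      rw [Complex.norm_real, Real.norm_eq_abs]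
    rw [h1] at h0
    rw [h0]
    exact Finset.prod_congr rfl fun j _ => h2 j
  rw [← habs]
  obtain ⟨m, hm⟩ := IsIntegrallyClosed.isIntegral_iff.mp (Algebra.isIntegral_norm ℚ hint)
  have hne : Algebra.norm ℚ u ≠ 0 := by
    rw [Algebra.norm_ne_zero_iff]
    exact hu
  have hm0 : m ≠ 0 := by rintro rfl; simp at hm; exact hne hm.symm
  rw [← hm]
  have h1m : (1 : ℤ) ≤ |m| := Int.one_le_abs hm0
  have : (algebraMap ℤ ℚ) m = (m : ℚ) := by simp [algebraMap_int_eq]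
  rw [this]
  push_cast
  exact_mod_cast h1m

lemma stmt19_ram_bound {L : Type*} [Field L] {c₁ c₂ : L} (φ : L →+* ℝ)
    (h1 : φ c₁ < 0) (h2 : φ c₂ < 0) (α : ℍ[L, c₁, c₂]) (hα : α * star α = 1) :
    |φ (2 * α.re)| ≤ 2 := by
  have h : α.re * α.re + c₁ * α.imI * (-α.imI) + c₂ * α.imJ * (-α.imJ)
      - c₁ * c₂ * α.imK * (-α.imK) = 1 := by
    have := congr_arg QuaternionAlgebra.re hα
    simp only [QuaternionAlgebra.re_mul, QuaternionAlgebra.imI_star, QuaternionAlgebra.imJ_star,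
      QuaternionAlgebra.imK_star, QuaternionAlgebra.re_star, QuaternionAlgebra.re_one] at this
    linear_combination this
  have h3 := congr_arg φ h
  simp only [map_add, map_sub, map_mul, map_neg, map_one] at h3
  rw [abs_le]
  constructor <;> [skip; skip] <;> rw [map_mul] <;>
    · have : φ 2 = 2 := by norm_num [map_ofNat]
      rw [this]
      nlinarith [sq_nonneg (φ α.imI), sq_nonneg (φ α.imJ), sq_nonneg (φ α.imK),
        sq_nonneg (φ α.re - 1), sq_nonneg (φ α.re + 1),
        mul_pos (neg_pos.mpr h1) (neg_pos.mpr h2)]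

/-- Let `Γ` be the irreducible cocompact lattice in `PSL(2,ℝ)^d` derived from
a maximal order `R` in a quaternion algebra `A = ℍ[L, c₁, c₂]` over a totally real field `L` of
degree `n ≥ d` (with real embeddings `ι 0, …, ι (n-1)`, and ramified at all the real places
`ι j` with `j ≥ d`, i.e. `ι j c₁ < 0` and `ι j c₂ < 0` there).  The trace set of `Γ` is
`Tr(Γ) = {(ι_1(Trd α), …, ι_d(Trd α)) : α ∈ R, Nrd α = 1} ⊆ ℝ^d`, where `Trd α = 2 α.re`.
Then for any `x ∈ ℝ^d` and `T_1, …, T_d > 0`,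
`#{t ∈ Tr(Γ) : |t_j - x_j| ≤ T_j ∀j} ≤ 1 + 2^{2n-d} T_1 ⋯ T_d`. -/
theorem stmt_19 {L : Type*} [Field L] [NumberField L]
    (n d : ℕ) (hd : 0 < d) (hdn : d ≤ n)
    (hn : Module.finrank ℚ L = n)
    (ι : Fin n → (L →+* ℝ)) (hι : Function.Injective ι)
    (c₁ c₂ : L) (hc₁ : c₁ ≠ 0) (hc₂ : c₂ ≠ 0)
    (hram : ∀ j : Fin n, d ≤ (j : ℕ) → ι j c₁ < 0 ∧ ι j c₂ < 0)
    (R : Subring ℍ[L, c₁, c₂])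
    (hRL : ∀ x : L, IsIntegral ℤ x → (algebraMap L ℍ[L, c₁, c₂] x) ∈ R)
    (hRtr : ∀ β ∈ R, IsIntegral ℤ ((β + star β).re))
    (hRnr : ∀ β ∈ R, IsIntegral ℤ ((β * star β).re))
    (x T : Fin d → ℝ) (hT : ∀ j, 0 < T j)
    (S : Finset (Fin d → ℝ))
    (hS : ∀ t ∈ S, (∃ α ∈ R, α * star α = 1 ∧
        ∀ j : Fin d, t j = ι (Fin.castLE hdn j) (2 * α.re)) ∧
      ∀ j : Fin d, |t j - x j| ≤ T j) :
    (S.card : ℝ) ≤ 1 + 2 ^ (2 * n - d) * ∏ j, T j := by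
  classical
  set j0 : Fin d := ⟨0, hd⟩ with hj0
  have h1 : ∀ t ∈ S, ∃ α, α ∈ R ∧ α * star α = 1 ∧
      ∀ j : Fin d, t j = ι (Fin.castLE hdn j) (2 * α.re) := by
    intro t ht
    obtain ⟨⟨α, hαR, hαn, hαt⟩, _⟩ := hS t ht
    exact ⟨α, hαR, hαn, hαt⟩
  choose! α hαR hαn hαt using h1
  set sL : (Fin d → ℝ) → L := fun t => 2 * (α t).re with hsL
  -- integrality of the trace
  have hint : ∀ t ∈ S, IsIntegral ℤ (sL t) := by
    intro t ht
    have h2 : ((α t) + star (α t)).re = sL t := by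
      simp [hsL, two_mul]
    rw [← h2]
    exact hRtr _ (hαR t ht)
  -- bound at ramified places
  have hramb : ∀ t ∈ S, ∀ j : Fin n, d ≤ (j : ℕ) → |ι j (sL t)| ≤ 2 := by
    intro t ht j hj
    exact stmt19_ram_bound (ι j) (hram j hj).1 (hram j hj).2 (α t) (hαn t ht)
  -- the product of the other box sides
  set P : ℝ := ∏ i ∈ Finset.univ.erase j0, (2 * T i) with hP
  have hPpos : 0 < P := Finset.prod_pos fun i _ => by have := hT i; linarith
  set Q : ℝ := P * 4 ^ (n - d) with hQ
  have hQpos : 0 < Q := mul_pos hPpos (by positivity)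
  set δ : ℝ := Q⁻¹ with hδ
  have hδpos : 0 < δ := inv_pos.mpr hQpos
  -- the gap lemma
  have gap : ∀ t ∈ S, ∀ t' ∈ S, t ≠ t' → δ ≤ |t j0 - t' j0| := by
    intro t ht t' ht' htt'
    set u : L := sL t - sL t' with hu
    have hune : u ≠ 0 := by
      intro h0
      apply htt'
      have hs : sL t = sL t' := sub_eq_zero.mp h0
      funext j
      rw [hαt t ht j, hαt t' ht' j]
      show ι (Fin.castLE hdn j) (sL t) = ι (Fin.castLE hdn j) (sL t')
      rw [hs]
    have h1le : 1 ≤ ∏ j, |ι j u| :=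
      one_le_prod_abs_embeddings n hn ι hι u hune ((hint t ht).sub (hint t' ht'))
    set B : Fin n → ℝ := fun j =>
      if h : (j : ℕ) < d then
        (if (⟨(j : ℕ), h⟩ : Fin d) = j0 then |t j0 - t' j0| else 2 * T ⟨(j : ℕ), h⟩)
      else 4 with hB
    have hcoord : ∀ i : Fin d, ι (Fin.castLE hdn i) u = t i - t' i := by
      intro i
      rw [map_sub]
      rw [hαt t ht i, hαt t' ht' i]
    have hbound : ∀ j : Fin n, |ι j u| ≤ B j := by
      intro j
      by_cases h : (j : ℕ) < d
      · have hj : j = Fin.castLE hdn ⟨(j : ℕ), h⟩ := by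
          apply Fin.ext; rfl
        have hc := hcoord ⟨(j : ℕ), h⟩
        rw [← hj] at hc
        rw [hc, hB]
        simp only [dif_pos h]
        by_cases he : (⟨(j : ℕ), h⟩ : Fin d) = j0
        · rw [if_pos he, he]
        · rw [if_neg he]
          calc |t ⟨(j : ℕ), h⟩ - t' ⟨(j : ℕ), h⟩| ≤
              |t ⟨(j : ℕ), h⟩ - x ⟨(j : ℕ), h⟩| + |x ⟨(j : ℕ), h⟩ - t' ⟨(j : ℕ), h⟩| :=
                abs_sub_le _ _ _
            _ ≤ T ⟨(j : ℕ), h⟩ + T ⟨(j : ℕ), h⟩ := by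
                have h1 := (hS t ht).2 ⟨(j : ℕ), h⟩
                have h2 := (hS t' ht').2 ⟨(j : ℕ), h⟩
                rw [abs_sub_comm] at h2
                linarith
            _ = 2 * T ⟨(j : ℕ), h⟩ := by ring
      · rw [hB]
        simp only [dif_neg h]
        have h4 : |ι j u| ≤ |ι j (sL t)| + |ι j (sL t')| := by
          rw [hu, map_sub, sub_eq_add_neg]
          refine (abs_add_le _ _).trans ?_
          rw [abs_neg]
        have := hramb t ht j (le_of_not_gt h)
        have := hramb t' ht' j (le_of_not_gt h)
        linarith
    have hprodle : ∏ j, |ι j u| ≤ ∏ j, B j :=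
      Finset.prod_le_prod (fun j _ => abs_nonneg _) (fun j _ => hbound j)
    -- compute ∏ B
    have hmap : Finset.univ.filter (fun j : Fin n => (j : ℕ) < d)
        = Finset.univ.map ⟨Fin.castLE hdn, Fin.castLE_injective hdn⟩ := by
      ext j
      simp only [Finset.mem_filter, Finset.mem_univ, true_and, Finset.mem_map,
        Function.Embedding.coeFn_mk]
      constructor
      · intro h; exact ⟨⟨(j : ℕ), h⟩, by apply Fin.ext; rfl⟩
      · rintro ⟨i, -, rfl⟩; exact i.isLt
    have hcard1 : (Finset.univ.filter (fun j : Fin n => (j : ℕ) < d)).card = d := by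
      rw [hmap, Finset.card_map, Finset.card_univ, Fintype.card_fin]
    have hcard2 : (Finset.univ.filter (fun j : Fin n => ¬ (j : ℕ) < d)).card = n - d := by
      have := Finset.card_filter_add_card_filter_not
        (s := (Finset.univ : Finset (Fin n))) (p := fun j : Fin n => (j : ℕ) < d)
      rw [Finset.card_univ, Fintype.card_fin, hcard1] at this
      omega
    have hprodB : ∏ j, B j = |t j0 - t' j0| * Q := by
      rw [← Finset.prod_filter_mul_prod_filter_not Finset.univ
        (fun j : Fin n => (j : ℕ) < d) B]
      have e1 : ∏ j ∈ Finset.univ.filter (fun j : Fin n => ¬ (j : ℕ) < d), B j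
          = 4 ^ (n - d) := by
        rw [Finset.prod_congr rfl (fun j hj => show B j = 4 by
            simp only [hB]
            exact dif_neg (Finset.mem_filter.mp hj).2), Finset.prod_const, hcard2]
      have e2 : ∏ j ∈ Finset.univ.filter (fun j : Fin n => (j : ℕ) < d), B j
          = |t j0 - t' j0| * P := by
        rw [hmap, Finset.prod_map]
        have e3 : ∀ i : Fin d, B (Fin.castLE hdn i)
            = if i = j0 then |t j0 - t' j0| else 2 * T i := by
          intro i
          rw [hB]
          have hlt : ((Fin.castLE hdn i : Fin n) : ℕ) < d := i.isLt
          simp only [dif_pos hlt]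
          congr 1
        simp only [Function.Embedding.coeFn_mk]
        rw [Finset.prod_congr rfl (fun i _ => e3 i)]
        rw [← Finset.mul_prod_erase Finset.univ _ (Finset.mem_univ j0), if_pos rfl, hP]
        congr 1
        exact Finset.prod_congr rfl fun i hi => if_neg (Finset.mem_erase.mp hi).1
      rw [e1, e2, hQ]
      ring
    have hfin : 1 ≤ |t j0 - t' j0| * Q := by
      rw [← hprodB]; exact le_trans h1le hprodle
    rw [hδ, inv_eq_one_div, div_le_iff₀ hQpos]
    linarith [hfin]
  -- counting via floor function
  set g : (Fin d → ℝ) → ℤ := fun t => ⌊(t j0 - x j0 + T j0) / δ⌋ with hg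
  have hginj : Set.InjOn g S := by
    intro t ht t' ht' hgtt'
    by_contra htt'
    have h5 := Int.abs_sub_lt_one_of_floor_eq_floor (R := ℝ) hgtt'
    rw [div_sub_div_same] at h5
    have h6 : (t j0 - x j0 + T j0) - (t' j0 - x j0 + T j0) = t j0 - t' j0 := by ring
    rw [h6, abs_div, abs_of_pos hδpos, div_lt_one hδpos] at h5
    exact absurd h5 (not_lt.mpr (gap t ht t' ht' htt'))
  set K : ℤ := ⌊2 * T j0 / δ⌋ with hK
  have hKnn : 0 ≤ K := Int.floor_nonneg.mpr (div_nonneg (by linarith [hT j0]) hδpos.le)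
  have hsub : S.image g ⊆ Finset.Icc 0 K := by
    intro k hk
    obtain ⟨t, ht, rfl⟩ := Finset.mem_image.mp hk
    have hb := (hS t ht).2 j0
    rw [abs_le] at hb
    rw [Finset.mem_Icc]
    constructor
    · exact Int.floor_nonneg.mpr (div_nonneg (by linarith [hb.1, hT j0]) hδpos.le)
    · apply Int.floor_le_floor
      rw [div_eq_mul_inv, div_eq_mul_inv]
      exact mul_le_mul_of_nonneg_right (by linarith [hb.2]) (inv_nonneg.mpr hδpos.le)
  have hcard : S.card ≤ (K + 1).toNat := by
    calc S.card = (S.image g).card := (Finset.card_image_of_injOn hginj).symm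
      _ ≤ (Finset.Icc (0 : ℤ) K).card := Finset.card_le_card hsub
      _ = (K + 1 - 0).toNat := Int.card_Icc 0 K
      _ = (K + 1).toNat := by rw [sub_zero]
  have h8 : (S.card : ℤ) ≤ K + 1 := by omega
  have h7 : (S.card : ℝ) ≤ (K : ℝ) + 1 := by exact_mod_cast h8
  have hKle : (K : ℝ) ≤ 2 * T j0 / δ := Int.floor_le _
  have h9 : (2 * T j0) * P = ∏ i, (2 * T i) :=
    Finset.mul_prod_erase Finset.univ (fun i => 2 * T i) (Finset.mem_univ j0)
  have h10 : ∏ i, (2 * T i) = 2 ^ d * ∏ i, T i := by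
    rw [Finset.prod_mul_distrib, Finset.prod_const, Finset.card_univ, Fintype.card_fin]
  have h11 : (2 : ℝ) ^ d * 4 ^ (n - d) = 2 ^ (2 * n - d) := by
    rw [show (4 : ℝ) = 2 ^ 2 by norm_num, ← pow_mul, ← pow_add]
    congr 1
    omega
  have hfinal : 2 * T j0 / δ = 2 ^ (2 * n - d) * ∏ j, T j := by
    rw [hδ, div_eq_mul_inv, inv_inv, hQ, ← mul_assoc, h9, h10, mul_right_comm, h11]
  linarith [hKle, h7, hfinal.symm.le, hfinal.le]
end
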